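/- arXiv:math/0610161 — 6 statements merged into one kernel-verified Lean document; each statement's English description precedes it below -/
import Mathlib

section
/- Let q ≥ 3 be a prime power. A subgroup U of U_n(𝔽_q) is a pattern group (that is, U = U_J for some closed set J ⊆ {(i,j) : 1 ≤ i < j ≤ n}) if and only if U is invariant under conjugation by every invertible diagonal matrix in GL_n(𝔽_q). -/
open Matrix BigOperators

namespace SCT

/-- Pairs of indices. -/
abbrev Pr (n : ℕ) := Fin n × Fin n

/-- A closed subset `J ⊆ {(i,j) : i < j}`:  `(i,j) ∈ J` and `(j,k) ∈ J` imply `(i,k) ∈ J`. -/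
def Closed {n : ℕ} (J : Finset (Pr n)) : Prop :=
  (∀ p ∈ J, p.1 < p.2) ∧
  ∀ i j k : Fin n, (i, j) ∈ J → (j, k) ∈ J → (i, k) ∈ J

variable {F : Type*} [Field F] [Fintype F] [DecidableEq F] {n : ℕ}

/-- `X_φ = Σ_{(i,j) ∈ J} φ_{ij} X_{ij}`. -/
def Xmat (J : Finset (Pr n)) (φ : Pr n → F) : Matrix (Fin n) (Fin n) F :=
  Matrix.of fun i j => if (i, j) ∈ J then φ (i, j) else 0

/-- `x_φ = 1 + X_φ`. -/
def xmat (J : Finset (Pr n)) (φ : Pr n → F) : Matrix (Fin n) (Fin n) F :=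
  1 + Xmat J φ

/-- `x_{ij}(t) = 1 + t X_{ij}`. -/
def xelt (i j : Fin n) (t : F) : Matrix (Fin n) (Fin n) F :=
  1 + Matrix.single i j t

/-- The pattern group `U_J`, as a set of matrices: ones on the diagonal, entries off the
diagonal vanish outside `J`. -/
def UJ (J : Finset (Pr n)) : Set (Matrix (Fin n) (Fin n) F) :=
  {M | (∀ i, M i i = 1) ∧ ∀ i j : Fin n, i ≠ j → (i, j) ∉ J → M i j = 0}

/-- `𝔫_J`: matrices supported on `J`. -/
def nJset (J : Finset (Pr n)) : Set (Matrix (Fin n) (Fin n) F) :=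
  {M | ∀ i j : Fin n, (i, j) ∉ J → M i j = 0}

/-- The functional `λ_η` evaluated at a matrix of `𝔫_J`. -/
def lam (J : Finset (Pr n)) (η : Pr n → F) (X : Matrix (Fin n) (Fin n) F) : F :=
  ∑ p ∈ J, η p * X p.1 p.2

/-- A functional with coefficients indexed by `J` evaluated at a matrix. -/
def lamSub (J : Finset (Pr n)) (η : {p // p ∈ J} → F) (X : Matrix (Fin n) (Fin n) F) : F :=
  ∑ p ∈ J.attach, η p * X p.1.1 p.1.2

/-- The two-sided orbit `O_φ = U_J X_φ U_J ⊆ 𝔫_J`. -/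
def biOrbit (J : Finset (Pr n)) (φ : Pr n → F) : Set (Matrix (Fin n) (Fin n) F) :=
  {Y | ∃ u v : Matrix (Fin n) (Fin n) F, u ∈ UJ J ∧ v ∈ UJ J ∧ Y = u * Xmat J φ * v}

/-- `(M_φ^R)_{(i,l),(j,k)} = φ_{ij}` if `k = l` and `(i,j,l) ∈ 𝒫`, else `0`. -/
def MphiR (J : Finset (Pr n)) (φ : Pr n → F) : Matrix {p // p ∈ J} {p // p ∈ J} F :=
  Matrix.of fun p q =>
    if q.1.2 = p.1.2 ∧ (p.1.1, q.1.1) ∈ J ∧ (q.1.1, p.1.2) ∈ J then φ (p.1.1, q.1.1) else 0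

/-- `(M_φ^L)_{(i,l),(j,k)} = φ_{kl}` if `i = j` and `(i,k,l) ∈ 𝒫`, else `0`. -/
def MphiL (J : Finset (Pr n)) (φ : Pr n → F) : Matrix {p // p ∈ J} {p // p ∈ J} F :=
  Matrix.of fun p q =>
    if q.1.1 = p.1.1 ∧ (p.1.1, q.1.2) ∈ J ∧ (q.1.2, p.1.2) ∈ J then φ (q.1.2, p.1.2) else 0

/-- `(M_L^η)_{(j,k),(i,l)} = η_{ik}` if `l = j` and `(i,j,k) ∈ 𝒫`, else `0`. -/
def MetaL (J : Finset (Pr n)) (η : Pr n → F) : Matrix {p // p ∈ J} {p // p ∈ J} F :=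
  Matrix.of fun p q =>
    if q.1.2 = p.1.1 ∧ (q.1.1, p.1.1) ∈ J ∧ (p.1.1, p.1.2) ∈ J then η (q.1.1, p.1.2) else 0

/-- `(M_R^η)_{(j,k),(i,l)} = η_{jl}` if `k = i` and `(j,k,l) ∈ 𝒫`, else `0`. -/
def MetaR (J : Finset (Pr n)) (η : Pr n → F) : Matrix {p // p ∈ J} {p // p ∈ J} F :=
  Matrix.of fun p q =>
    if q.1.1 = p.1.2 ∧ (p.1.1, p.1.2) ∈ J ∧ (p.1.2, q.1.2) ∈ J then η (p.1.1, q.1.2) else 0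

/-- `corank(η) = rank(M_L^η)`. -/
noncomputable def corank (J : Finset (Pr n)) (η : Pr n → F) : ℕ := (MetaL J η).rank

/-- `(M_φ^η)_{(i,j),(k,l)} = φ_{jk} η_{il}` if `(i,j,k,l) ∈ 𝒫`, else `0`. -/
def Mmesh (J : Finset (Pr n)) (φ η : Pr n → F) : Matrix {p // p ∈ J} {p // p ∈ J} F :=
  Matrix.of fun p q =>
    if (p.1.2, q.1.1) ∈ J then φ (p.1.2, q.1.1) * η (p.1.1, q.1.2) else 0

/-- `(a_φ^η)_{(i,j)} = Σ_{(i,j,k) ∈ 𝒫} φ_{jk} η_{ik}`. -/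
def aVec (J : Finset (Pr n)) (φ η : Pr n → F) : {p // p ∈ J} → F :=
  fun p => ∑ k : Fin n, if (p.1.2, k) ∈ J then φ (p.1.2, k) * η (p.1.1, k) else 0

/-- `(b_φ^η)_{(j,k)} = Σ_{(i,j,k) ∈ 𝒫} φ_{ij} η_{ik}`. -/
def bVec (J : Finset (Pr n)) (φ η : Pr n → F) : {p // p ∈ J} → F :=
  fun p => ∑ i : Fin n, if (i, p.1.1) ∈ J then φ (i, p.1.1) * η (i, p.1.2) else 0

/-- `φ` meshes with `η`. -/
def Meshes (J : Finset (Pr n)) (φ η : Pr n → F) : Prop :=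
  (∃ b : {p // p ∈ J} → F, (Mmesh J φ η).mulVec b = -aVec J φ η) ∧
  ∀ v : {p // p ∈ J} → F, (Mmesh J φ η).mulVec v = 0 → bVec J φ η ⬝ᵥ v = 0

/-- The supercharacter `χ^η` evaluated at `x_φ`. -/
noncomputable def superchar (J : Finset (Pr n)) (θ : AddChar F ℂ) (η φ : Pr n → F) : ℂ :=
  ((Fintype.card F : ℂ) ^ corank J η / (Nat.card (biOrbit J φ) : ℂ)) *
    ∑ᶠ Y ∈ biOrbit J φ, (starRingEnd ℂ) (θ (lam J η Y))

/-- `χ` restricted to `U` is the character of an irreducible complex representation of `U`. -/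
def IsIrredCharOn (U : Set (Matrix (Fin n) (Fin n) F))
    (χ : Matrix (Fin n) (Fin n) F → ℂ) : Prop :=
  ∃ d : ℕ, 0 < d ∧ ∃ ρ : Matrix (Fin n) (Fin n) F → Matrix (Fin d) (Fin d) ℂ,
    ρ 1 = 1 ∧
    (∀ A ∈ U, ∀ B ∈ U, ρ (A * B) = ρ A * ρ B) ∧
    (∀ W : Submodule ℂ (Fin d → ℂ), (∀ A ∈ U, ∀ w ∈ W, (ρ A).mulVec w ∈ W) → W = ⊥ ∨ W = ⊤) ∧
    ∀ A ∈ U, (ρ A).trace = χ A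

/-- The full set of positive roots. -/
def Jfull (n : ℕ) : Finset (Pr n) := Finset.univ.filter fun p : Pr n => p.1 < p.2

/-!  The total order and partial sum on positive roots. -/

/-- `α < β` in the total order: `(r,s) < (i,j)` iff `r > i`, or `r = i` and `s > j`. -/
def rlt {n : ℕ} (a b : Pr n) : Prop := b.1 < a.1 ∨ (a.1 = b.1 ∧ b.2 < a.2)

/-- `α + β` is defined in `R⁺`. -/
def rdef {n : ℕ} (a b : Pr n) : Prop := a.2 = b.1 ∨ b.2 = a.1

/-- The sum `α + β` (when defined). -/
def rsum {n : ℕ} (a b : Pr n) : Pr n := if a.2 = b.1 then (a.1, b.2) else (b.1, a.2)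

/-! Algebra groups. -/

/-- The algebra group `H = 1 + 𝔫`. -/
def algH (nn : Submodule F (Matrix (Fin n) (Fin n) F)) : Set (Matrix (Fin n) (Fin n) F) :=
  {M | ∃ X ∈ nn, M = 1 + X}

/-- The two sided orbit `H X H ⊆ 𝔫` of `X`. -/
def algBiOrbit (nn : Submodule F (Matrix (Fin n) (Fin n) F))
    (X : Matrix (Fin n) (Fin n) F) : Set nn :=
  {Y | ∃ u ∈ algH nn, ∃ v ∈ algH nn, (Y : Matrix (Fin n) (Fin n) F) = u * X * v}

/-- The right orbit `{λ · u : u ∈ H} ⊆ 𝔫*` of a functional `λ`, described via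
`λ' = λ · u⁻¹ ↔ (∀ Y, λ' Y = λ (Y u))`. -/
def algRightOrbit (nn : Submodule F (Matrix (Fin n) (Fin n) F))
    (l : Module.Dual F nn) : Set (Module.Dual F nn) :=
  {l' | ∃ u ∈ algH nn, ∀ (Y : nn) (h : (Y : Matrix (Fin n) (Fin n) F) * u ∈ nn),
      l' Y = l ⟨(Y : Matrix (Fin n) (Fin n) F) * u, h⟩}

/-- The supercharacter `χ^λ` of an algebra group, evaluated at `1 + X`. -/
noncomputable def algSuperchar (nn : Submodule F (Matrix (Fin n) (Fin n) F))
    (θ : AddChar F ℂ) (l : Module.Dual F nn) (X : Matrix (Fin n) (Fin n) F) : ℂ :=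
  ((Nat.card (algRightOrbit nn l) : ℂ) / (Nat.card (algBiOrbit nn X) : ℂ)) *
    ∑ᶠ Y ∈ algBiOrbit nn X, (starRingEnd ℂ) (θ (l Y))

/-! Algebra groups with a fixed basis `X_1, …, X_d` of `𝔫`. -/

/-- `X_ρ = Σ_i ρ_i X_i`. -/
def bigX {d : ℕ} (Xb : Fin d → Matrix (Fin n) (Fin n) F) (ρ : Fin d → F) :
    Matrix (Fin n) (Fin n) F :=
  ∑ i : Fin d, ρ i • Xb i

/-- The two-sided orbit of `X_φ`, in coordinates. -/
def algCoeffBiOrbit {d : ℕ} (Xb : Fin d → Matrix (Fin n) (Fin n) F) (φ : Fin d → F) :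
    Set (Fin d → F) :=
  {ρ | ∃ ζ₁ ζ₂ : Fin d → F,
      (1 + bigX Xb ζ₁) * bigX Xb φ * (1 + bigX Xb ζ₂) = bigX Xb ρ}

/-- The right orbit of `λ_η`, in coordinates (`λ_η(X_ν) = η ⬝ᵥ ν`). -/
def algCoeffRightOrbit {d : ℕ} (Xb : Fin d → Matrix (Fin n) (Fin n) F) (η : Fin d → F) :
    Set (Fin d → F) :=
  {η' | ∃ ζ : Fin d → F, ∀ ρ ν : Fin d → F,
      bigX Xb ρ * (1 + bigX Xb ζ) = bigX Xb ν → η' ⬝ᵥ ρ = η ⬝ᵥ ν}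

/-- The supercharacter `χ^η` of an algebra group with fixed basis, evaluated at `x_φ`. -/
noncomputable def algCoeffSuperchar {d : ℕ} (Xb : Fin d → Matrix (Fin n) (Fin n) F)
    (θ : AddChar F ℂ) (η φ : Fin d → F) : ℂ :=
  ((Nat.card (algCoeffRightOrbit Xb η) : ℂ) / (Nat.card (algCoeffBiOrbit Xb φ) : ℂ)) *
    ∑ᶠ ρ ∈ algCoeffBiOrbit Xb φ, (starRingEnd ℂ) (θ (η ⬝ᵥ ρ))

/-- `(C_i)_{jk} = c_{ij}^k`. -/
def Cleft {d : ℕ} (c : Fin d → Fin d → Fin d → F) (i : Fin d) : Matrix (Fin d) (Fin d) F :=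
  Matrix.of fun j k => c i j k

/-- `(C^j)_{ik} = c_{ij}^k`. -/
def Cright {d : ℕ} (c : Fin d → Fin d → Fin d → F) (j : Fin d) : Matrix (Fin d) (Fin d) F :=
  Matrix.of fun i k => c i j k

/-- `(M_φ^η)_{ij} = φ C_i C^j η`. -/
def algMmesh {d : ℕ} (c : Fin d → Fin d → Fin d → F) (φ η : Fin d → F) :
    Matrix (Fin d) (Fin d) F :=
  Matrix.of fun i j => φ ⬝ᵥ (Cleft c i * Cright c j).mulVec η

/-- `(a_φ^η)_i = φ C_i η`. -/
def algAVec {d : ℕ} (c : Fin d → Fin d → Fin d → F) (φ η : Fin d → F) : Fin d → F :=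
  fun i => φ ⬝ᵥ (Cleft c i).mulVec η

/-- `(b_φ^η)_j = φ C^j η`. -/
def algBVec {d : ℕ} (c : Fin d → Fin d → Fin d → F) (φ η : Fin d → F) : Fin d → F :=
  fun j => φ ⬝ᵥ (Cright c j).mulVec η

/-- `φ` meshes with `η` (algebra-group version). -/
def algMeshes {d : ℕ} (c : Fin d → Fin d → Fin d → F) (φ η : Fin d → F) : Prop :=
  (∃ b : Fin d → F, (algMmesh c φ η).mulVec b = -algAVec c φ η) ∧
  ∀ v : Fin d → F, (algMmesh c φ η).mulVec v = 0 → algBVec c φ η ⬝ᵥ v = 0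

/-! ### Auxiliary material for `stmt0` -/

section StmtZeroAux
set_option linter.unusedSectionVars false
set_option maxHeartbeats 1000000

variable {F : Type*} [Field F] [Fintype F] [DecidableEq F] {n : ℕ}

/-- Rank of a position, used as an elimination measure. -/
def rnk {n : ℕ} (p : Pr n) : ℕ := p.2.val * n + (n - p.1.val)

lemma rnk_le {n : ℕ} (p : Pr n) : rnk p ≤ n * n := by
  obtain ⟨a, b⟩ := p
  show b.val * n + (n - a.val) ≤ n * n
  have e1 : n - a.val ≤ n := Nat.sub_le _ _
  have e3 : b.val * n + n ≤ n * n := by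
    calc b.val * n + n = (b.val + 1) * n := by ring
      _ ≤ n * n := Nat.mul_le_mul_right n b.isLt
  set X := b.val * n with hX
  set Z := n * n with hZ
  omega

lemma rnk_lt_left {n : ℕ} {a b i j : Fin n} (h : b < j) :
    rnk ((a, b) : Pr n) < rnk ((i, j) : Pr n) := by
  show b.val * n + (n - a.val) < j.val * n + (n - i.val)
  have e1 : n - a.val ≤ n := Nat.sub_le _ _
  have e2 : 1 ≤ n - i.val := by have := i.isLt; omega
  have e3 : b.val * n + n ≤ j.val * n := by
    have h' : b.val + 1 ≤ j.val := h
    calc b.val * n + n = (b.val + 1) * n := by ring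
      _ ≤ j.val * n := Nat.mul_le_mul_right n h'
  set X := b.val * n with hX
  set Y := j.val * n with hY
  omega

lemma rnk_lt_col {n : ℕ} {a i j : Fin n} (h : i < a) :
    rnk ((a, j) : Pr n) < rnk ((i, j) : Pr n) := by
  show j.val * n + (n - a.val) < j.val * n + (n - i.val)
  have h1 := a.isLt
  have h2 := i.isLt
  have h' : i.val < a.val := h
  set Y := j.val * n with hY
  omega

lemma rnk_le_cases {n : ℕ} {i j a b : Fin n} (h : rnk ((a, b) : Pr n) ≤ rnk ((i, j) : Pr n)) :
    b < j ∨ (b = j ∧ i ≤ a) := by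
  have h' : b.val * n + (n - a.val) ≤ j.val * n + (n - i.val) := h
  have ha := a.isLt
  have hi := i.isLt
  rcases lt_trichotomy b.val j.val with hbj | hbj | hbj
  · exact Or.inl hbj
  · right
    have hbj' : b = j := Fin.ext hbj
    subst hbj'
    refine ⟨rfl, ?_⟩
    have : i.val ≤ a.val := by
      set Y := b.val * n with hY
      omega
    exact this
  · exfalso
    have e3 : j.val * n + n ≤ b.val * n := by
      have h'' : j.val + 1 ≤ b.val := hbj
      calc j.val * n + n = (j.val + 1) * n := by ring
        _ ≤ b.val * n := Nat.mul_le_mul_right n h''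
    have e1 : n - a.val ≤ n := Nat.sub_le _ _
    have e2 : 1 ≤ n - a.val := by omega
    set X := b.val * n with hX
    set Y := j.val * n with hY
    omega

lemma mem_Jfull_iff {n : ℕ} {k l : Fin n} : ((k, l) : Pr n) ∈ Jfull n ↔ k < l := by
  simp [Jfull]

lemma not_mem_Jfull {n : ℕ} {k l : Fin n} (h : ¬ k < l) : ((k, l) : Pr n) ∉ Jfull n := by
  simp [Jfull, h]

lemma xelt_apply (i j : Fin n) (t : F) (k l : Fin n) :
    xelt i j t k l = (if k = l then (1 : F) else 0) + (if i = k ∧ j = l then t else 0) := by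
  rw [xelt, Matrix.add_apply, Matrix.one_apply]
  congr 1 <;> simp [Matrix.single]

lemma xelt_zero (i j : Fin n) : xelt i j (0 : F) = 1 := by
  rw [xelt, Matrix.single_zero, add_zero]

lemma xelt_mul (i j : Fin n) (hij : i ≠ j) (s t : F) :
    xelt i j s * xelt i j t = xelt i j (s + t) := by
  have hz : Matrix.single i j s * Matrix.single i j t = 0 :=
    Matrix.single_mul_single_of_ne _ _ _ _ (Ne.symm hij) _
  unfold xelt
  simp only [add_mul, mul_add, one_mul, mul_one, hz, Matrix.single_add]
  abel

lemma mul_xelt_apply (M : Matrix (Fin n) (Fin n) F) (i j : Fin n) (t : F) (k l : Fin n) :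
    (M * xelt i j t) k l = M k l + (if l = j then M k i * t else 0) := by
  rw [xelt, mul_add, mul_one, Matrix.add_apply]
  congr 1
  rcases eq_or_ne l j with rfl | h
  · simp
  · simp [h]

lemma std_neg (i j : Fin n) (t : F) :
    Matrix.single i j (-t) = -(Matrix.single i j t) := by
  ext a b
  simp only [Matrix.single, Matrix.neg_apply, Matrix.of_apply]
  split
  · rfl
  · exact neg_zero.symm

lemma xelt_comm {i j k : Fin n} (hij : i < j) (hjk : j < k) :
    xelt i j (1 : F) * xelt j k 1 * xelt i j (-1) * xelt j k (-1) = xelt i k 1 := by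
  have hji : j ≠ i := ne_of_gt hij
  have hki : k ≠ i := ne_of_gt (hij.trans hjk)
  have hkj : k ≠ j := ne_of_gt hjk
  unfold xelt
  rw [std_neg, std_neg]
  set E1 := Matrix.single i j (1 : F) with hE1
  set E2 := Matrix.single j k (1 : F) with hE2
  set K := Matrix.single i k (1 : F) with hK
  have h12 : E1 * E2 = K := by
    rw [hE1, hE2, hK, Matrix.single_mul_single_same, one_mul]
  have h11 : E1 * E1 = 0 := by rw [hE1]; exact Matrix.single_mul_single_of_ne _ _ _ _ hji _
  have h22 : E2 * E2 = 0 := by rw [hE2]; exact Matrix.single_mul_single_of_ne _ _ _ _ hkj _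
  have h21 : E2 * E1 = 0 := by rw [hE2, hE1]; exact Matrix.single_mul_single_of_ne _ _ _ _ hki _
  have h1K : E1 * K = 0 := by rw [hE1, hK]; exact Matrix.single_mul_single_of_ne _ _ _ _ hji _
  have h2K : E2 * K = 0 := by rw [hE2, hK]; exact Matrix.single_mul_single_of_ne _ _ _ _ hki _
  have hK1 : K * E1 = 0 := by rw [hK, hE1]; exact Matrix.single_mul_single_of_ne _ _ _ _ hki _
  have hK2 : K * E2 = 0 := by rw [hK, hE2]; exact Matrix.single_mul_single_of_ne _ _ _ _ hkj _
  have hKK : K * K = 0 := by rw [hK]; exact Matrix.single_mul_single_of_ne _ _ _ _ hki _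
  have e12 : (1 + E1) * (1 + E2) = 1 + E1 + E2 + K := by
    rw [add_mul, one_mul, mul_add, mul_one, h12]
    abel
  have e34 : (1 + -E1) * (1 + -E2) = 1 - E1 - E2 + K := by
    rw [add_mul, one_mul, mul_add, mul_one, neg_mul_neg, h12]
    abel
  rw [mul_assoc ((1 + E1) * (1 + E2)), e12, e34]
  simp only [mul_add, mul_sub, add_mul, sub_mul, one_mul, mul_one,
    h11, h22, h12, h21, h1K, h2K, hK1, hK2, hKK]
  abel

lemma lemA {U : Set (Matrix (Fin n) (Fin n) F)}
    (hsub : U ⊆ UJ (Jfull n))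
    (hmul : ∀ A ∈ U, ∀ B ∈ U, A * B ∈ U)
    (hinv : ∀ A ∈ U, ∃ B ∈ U, A * B = 1)
    (hdiag : ∀ (d : Fin n → Fˣ) (A : Matrix (Fin n) (Fin n) F), A ∈ U →
      Matrix.diagonal (fun i => (d i : F)) * A * Matrix.diagonal (fun i => ((d i)⁻¹ : F)) ∈ U)
    {c : F} (hc0 : c ≠ 0) (hc1 : c ≠ 1)
    {A : Matrix (Fin n) (Fin n) F} (hA : A ∈ U) {i j : Fin n}
    (hij : i < j) (hAij : A i j ≠ 0)
    (hcol : ∀ k l : Fin n, k ≠ l → l < j → A k l = 0)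
    (hbelow : ∀ k : Fin n, i < k → k ≠ j → A k j = 0) :
    xelt i j ((c⁻¹ - 1) * ((c - 1) * A i j)) ∈ U := by
  classical
  have hne : i ≠ j := Fin.ne_of_lt hij
  obtain ⟨Ad, hAdU, hAAd⟩ := hinv A hA
  obtain ⟨hAd1, hAoff⟩ := hsub hA
  obtain ⟨hAdd1, hAdoff⟩ := hsub hAdU
  have hAlow : ∀ k l : Fin n, l < k → A k l = 0 := fun k l h =>
    hAoff k l (ne_of_gt h) (not_mem_Jfull (asymm h))
  have hAdlow : ∀ k l : Fin n, l < k → Ad k l = 0 := fun k l h =>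
    hAdoff k l (ne_of_gt h) (not_mem_Jfull (asymm h))
  have hprod : ∀ k l : Fin n, ∑ r, A k r * Ad r l = if k = l then (1 : F) else 0 := by
    intro k l
    have h := (Matrix.ext_iff.mpr hAAd) k l
    rw [Matrix.mul_apply] at h
    rw [h, Matrix.one_apply]
  -- Claim 1: the column `j` of `Ad` vanishes strictly between `i` and `j`.
  have claim1 : ∀ m : ℕ, ∀ l : Fin n, n - l.val ≤ m → i < l → l ≠ j → Ad l j = 0 := by
    intro m
    induction m with
    | zero => intro l hl _ _; exact absurd hl (by have := l.isLt; omega)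
    | succ m ih =>
      intro l hl hil hlj
      have h0 := hprod l j
      rw [if_neg hlj] at h0
      have hsingle : ∑ r, A l r * Ad r j = A l l * Ad l j := by
        refine Finset.sum_eq_single l (fun r _ hrl => ?_) (fun h => absurd (Finset.mem_univ l) h)
        rcases lt_trichotomy r l with h | h | h
        · rw [hAlow l r h, zero_mul]
        · exact absurd h hrl
        · rcases eq_or_ne r j with rfl | hrj
          · rw [hbelow l hil hlj, zero_mul]
          · rw [ih r (by have h' : l.val < r.val := h; omega) (hil.trans h) hrj, mul_zero]
      rw [hsingle, hAd1 l, one_mul] at h0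
      exact h0
  have claim1' : ∀ l : Fin n, i < l → l ≠ j → Ad l j = 0 := fun l => claim1 (n - l.val) l le_rfl
  have hAdij : Ad i j = -(A i j) := by
    have h0 := hprod i j
    rw [if_neg hne] at h0
    have hsum : ∑ r, A i r * Ad r j = A i i * Ad i j + A i j * Ad j j := by
      rw [← Finset.sum_subset (Finset.subset_univ ({i, j} : Finset (Fin n)))]
      · rw [Finset.sum_insert (by simp [hne]), Finset.sum_singleton]
      · intro r _ hr
        simp only [Finset.mem_insert, Finset.mem_singleton, not_or] at hr
        obtain ⟨hri, hrj⟩ := hr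
        rcases lt_trichotomy r i with h | h | h
        · rw [hAlow i r h, zero_mul]
        · exact absurd h hri
        · rw [claim1' r h hrj, mul_zero]
    rw [hsum, hAd1 i, hAdd1 j, one_mul, mul_one] at h0
    exact eq_neg_of_add_eq_zero_left h0
  -- the first torus conjugation
  set cu : Fˣ := Units.mk0 c hc0 with hcu
  set d1 : Fin n → Fˣ := (fun r => if r = i then cu else 1) with hd1
  have hd1v : ∀ r, ((d1 r : Fˣ) : F) = if r = i then c else 1 := by
    intro r; by_cases h : r = i <;> simp [hd1, h, hcu]
  have hd1vi : ∀ r, ((d1 r : F))⁻¹ = if r = i then c⁻¹ else 1 := by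
    intro r; by_cases h : r = i <;> simp [hd1, h, hcu]
  set B : Matrix (Fin n) (Fin n) F :=
    (Matrix.diagonal (fun r => (d1 r : F)) * A * Matrix.diagonal (fun r => ((d1 r)⁻¹ : F))) * Ad
    with hB
  have hBU : B ∈ U := hmul _ (hdiag d1 A hA) _ hAdU
  have hBapp : ∀ k l : Fin n,
      B k l = ∑ r, (if k = i then c else 1) * A k r * (if r = i then c⁻¹ else 1) * Ad r l := by
    intro k l
    rw [hB, Matrix.mul_apply]
    refine Finset.sum_congr rfl fun r _ => ?_
    rw [Matrix.mul_diagonal, Matrix.diagonal_mul, hd1v, hd1vi]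
  have hAki : ∀ k : Fin n, k ≠ i → A k i = 0 := fun k hk => hcol k i hk hij
  have hBrow : ∀ k l : Fin n, k ≠ i → k ≠ l → B k l = 0 := by
    intro k l hki hkl
    rw [hBapp]
    have heach : ∀ r : Fin n,
        (if k = i then c else 1) * A k r * (if r = i then c⁻¹ else 1) * Ad r l
          = A k r * Ad r l := by
      intro r
      rw [if_neg hki]
      rcases eq_or_ne r i with rfl | hri
      · rw [hAki k hki]; ring
      · rw [if_neg hri]; ring
    rw [Finset.sum_congr rfl (fun r _ => heach r), hprod k l, if_neg hkl]
  have hwj : B i j = (c - 1) * A i j := by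
    rw [hBapp]
    have hsum : ∑ r, (if i = i then c else 1) * A i r * (if r = i then c⁻¹ else 1) * Ad r j
        = ((if i = i then c else 1) * A i i * (if i = i then c⁻¹ else 1) * Ad i j)
          + ((if i = i then c else 1) * A i j * (if j = i then c⁻¹ else 1) * Ad j j) := by
      rw [← Finset.sum_subset (Finset.subset_univ ({i, j} : Finset (Fin n)))]
      · rw [Finset.sum_insert (by simp [hne]), Finset.sum_singleton]
      · intro r _ hr
        simp only [Finset.mem_insert, Finset.mem_singleton, not_or] at hr
        obtain ⟨hri, hrj⟩ := hr
        rcases lt_trichotomy r i with h | h | h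
        · rw [hAlow i r h]; ring
        · exact absurd h hri
        · rw [claim1' r h hrj]; ring
    rw [hsum, hAd1 i, hAdd1 j, hAdij, if_pos rfl, if_pos rfl, if_neg (Ne.symm hne)]
    field_simp
    ring
  obtain ⟨hBd1, hBoff⟩ := hsub hBU
  set w : Fin n → F := fun l => if l = i then 0 else B i l with hw
  have hwi : w i = 0 := by simp [hw]
  have hwjv : w j = (c - 1) * A i j := by
    rw [hw]; simp only []
    rw [if_neg (Ne.symm hne), hwj]
  have hBform : ∀ k l : Fin n, B k l = (if k = l then (1 : F) else 0)
      + (if k = i then w l else 0) := by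
    intro k l
    rcases eq_or_ne k i with rfl | hki
    · rcases eq_or_ne k l with rfl | hkl
      · rw [if_pos rfl, if_pos rfl, hwi, add_zero, hBd1 k]
      · rw [if_neg hkl, if_pos rfl, zero_add, hw]
        simp only []
        rw [if_neg (Ne.symm hkl)]
    · rcases eq_or_ne k l with rfl | hkl
      · rw [if_pos rfl, if_neg hki, add_zero, hBd1 k]
      · rw [if_neg hkl, if_neg hki, add_zero, hBrow k l hki hkl]
  set V : Matrix (Fin n) (Fin n) F := B - 1 with hV
  have hVapp : ∀ k l : Fin n, V k l = if k = i then w l else 0 := by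
    intro k l
    rw [hV, Matrix.sub_apply, hBform, Matrix.one_apply]
    exact add_sub_cancel_left _ _
  have hVV : V * V = 0 := by
    ext k l
    rw [Matrix.mul_apply, Matrix.zero_apply]
    refine Finset.sum_eq_zero fun r _ => ?_
    rcases eq_or_ne r i with rfl | hri
    · have : V k r = 0 := by rw [hVapp, hwi, ite_self]
      rw [this, zero_mul]
    · rw [hVapp r l, if_neg hri, mul_zero]
  set Cc : Matrix (Fin n) (Fin n) F := 1 - V with hCc
  have hBCc : B * Cc = 1 := by
    have hB1V : B = 1 + V := by rw [hV]; abel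
    have hstep : B * Cc = 1 + V - V - V * V := by rw [hB1V, hCc]; noncomm_ring
    rw [hstep, hVV, sub_zero]
    abel
  obtain ⟨C, hCU, hBC⟩ := hinv B hBU
  have hCeq : C = Cc := by
    have h1' : Cc * B = 1 := mul_eq_one_comm.mp hBCc
    calc C = (Cc * B) * C := by rw [h1', one_mul]
      _ = Cc * (B * C) := by rw [mul_assoc]
      _ = Cc := by rw [hBC, mul_one]
  rw [hCeq] at hCU
  -- the second torus conjugation
  set d2 : Fin n → Fˣ := (fun r => if r = j then cu else 1) with hd2
  have hd2v : ∀ r, ((d2 r : Fˣ) : F) = if r = j then c else 1 := by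
    intro r; by_cases h : r = j <;> simp [hd2, h, hcu]
  have hd2vi : ∀ r, ((d2 r : F))⁻¹ = if r = j then c⁻¹ else 1 := by
    intro r; by_cases h : r = j <;> simp [hd2, h, hcu]
  set B2 : Matrix (Fin n) (Fin n) F :=
    Matrix.diagonal (fun r => (d2 r : F)) * B * Matrix.diagonal (fun r => ((d2 r)⁻¹ : F))
    with hB2
  have hB2U : B2 ∈ U := hdiag d2 B hBU
  have hB2app : ∀ k l : Fin n,
      B2 k l = (if k = j then c else 1) * B k l * (if l = j then c⁻¹ else 1) := by
    intro k l
    rw [hB2, Matrix.mul_diagonal, Matrix.diagonal_mul, hd2v, hd2vi]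
  set V2 : Matrix (Fin n) (Fin n) F := B2 - 1 with hV2
  have hwB : w j = B i j := by
    rw [hw]; simp only []; rw [if_neg (Ne.symm hne)]
  have hV2app : ∀ k l : Fin n,
      V2 k l = if k = i then (if l = j then c⁻¹ * w l else w l) else 0 := by
    intro k l
    have hsub2 : V2 k l = B2 k l - (if k = l then (1 : F) else 0) := by
      rw [hV2, Matrix.sub_apply, Matrix.one_apply]
    by_cases hki : k = i
    · rw [hsub2, hB2app, hki, if_neg hne, one_mul, if_pos rfl]
      by_cases hlj : l = j
      · rw [hlj, if_pos rfl, if_pos rfl, if_neg hne, hwB]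
        ring
      · rw [if_neg hlj, if_neg hlj, mul_one]
        by_cases hli : i = l
        · rw [if_pos hli, ← hli, hBd1 i, hwi]
          exact sub_self 1
        · rw [if_neg hli, sub_zero, hw]
          simp only []
          rw [if_neg (fun h : l = i => hli h.symm)]
    · rw [hsub2, hB2app, if_neg hki]
      by_cases hkl : k = l
      · rw [← hkl, if_pos rfl, hBd1 k]
        by_cases hkj : k = j
        · rw [if_pos hkj, if_pos hkj, mul_one]
          field_simp
          simp
        · rw [if_neg hkj, if_neg hkj]
          ring
      · rw [if_neg hkl, hBrow k l hki hkl]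
        ring
  have hV2V : V2 * V = 0 := by
    ext k l
    rw [Matrix.mul_apply, Matrix.zero_apply]
    refine Finset.sum_eq_zero fun r _ => ?_
    rcases eq_or_ne r i with rfl | hri
    · have : V2 k r = 0 := by
        rw [hV2app, if_neg hne, hwi, ite_self]
      rw [this, zero_mul]
    · rw [hVapp r l, if_neg hri, mul_zero]
  have hX : B2 * Cc = xelt i j ((c⁻¹ - 1) * ((c - 1) * A i j)) := by
    have hB2V : B2 = 1 + V2 := by rw [hV2]; abel
    have hstep : B2 * Cc = 1 + (V2 - V) - V2 * V := by rw [hB2V, hCc]; noncomm_ring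
    rw [hstep, hV2V, sub_zero]
    have hdiff : V2 - V = Matrix.single i j ((c⁻¹ - 1) * ((c - 1) * A i j)) := by
      ext k l
      rw [Matrix.sub_apply, hV2app, hVapp]
      rcases eq_or_ne k i with rfl | hki
      · rcases eq_or_ne l j with rfl | hlj
        · rw [if_pos rfl, if_pos rfl, if_pos rfl, Matrix.single_apply_same, hwjv]
          ring
        · rw [if_pos rfl, if_neg hlj, if_pos rfl, sub_self,
            Matrix.single_apply_of_ne (h := fun h : _ ∧ j = l => hlj h.2.symm)]
      · rw [if_neg hki, if_neg hki, sub_self,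
          Matrix.single_apply_of_ne (h := fun h : i = k ∧ _ => hki h.1.symm)]
    rw [hdiff, xelt]
  have hfin : B2 * Cc ∈ U := hmul _ hB2U _ hCU
  rwa [hX] at hfin

lemma xelt_scale {U : Set (Matrix (Fin n) (Fin n) F)}
    (h1 : (1 : Matrix (Fin n) (Fin n) F) ∈ U)
    (hdiag : ∀ (d : Fin n → Fˣ) (A : Matrix (Fin n) (Fin n) F), A ∈ U →
      Matrix.diagonal (fun i => (d i : F)) * A * Matrix.diagonal (fun i => ((d i)⁻¹ : F)) ∈ U)
    {i j : Fin n} (hij : i ≠ j) {s : F} (hs : s ≠ 0)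
    (hmem : xelt i j s ∈ U) (t : F) : xelt i j t ∈ U := by
  rcases eq_or_ne t 0 with rfl | ht
  · rw [xelt_zero]; exact h1
  · set d : Fin n → Fˣ :=
      (fun r => if r = j then Units.mk0 (s * t⁻¹) (mul_ne_zero hs (inv_ne_zero ht)) else 1)
      with hd
    have hmem2 := hdiag d _ hmem
    have hdv : ∀ r, ((d r : Fˣ) : F) = if r = j then s * t⁻¹ else 1 := by
      intro r; by_cases h : r = j <;> simp [hd, h]
    have hdvi : ∀ r, ((d r : F))⁻¹ = if r = j then (s * t⁻¹)⁻¹ else 1 := by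
      intro r; by_cases h : r = j <;> simp [hd, h]
    have heq : Matrix.diagonal (fun r => (d r : F)) * xelt i j s
        * Matrix.diagonal (fun r => ((d r)⁻¹ : F)) = xelt i j t := by
      ext k l
      rw [Matrix.mul_diagonal, Matrix.diagonal_mul, hdv, hdvi, xelt_apply, xelt_apply]
      by_cases hmatch : i = k ∧ j = l
      · obtain ⟨h1x, h2x⟩ := hmatch
        rw [← h1x, ← h2x]
        simp only [if_pos rfl, and_self, if_neg hij]
        simp only [if_true, zero_add]
        field_simp
      · rw [if_neg hmatch, if_neg hmatch]
        simp only [add_zero]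
        by_cases hkl : k = l
        · rw [← hkl, if_pos rfl]
          by_cases hkj : k = j
          · rw [if_pos hkj, if_pos hkj]
            field_simp
          · rw [if_neg hkj, if_neg hkj]
            ring
        · rw [if_neg hkl]
          ring
    rw [heq] at hmem2
    exact hmem2

lemma keyRoots {U : Set (Matrix (Fin n) (Fin n) F)}
    (hsub : U ⊆ UJ (Jfull n))
    (h1 : (1 : Matrix (Fin n) (Fin n) F) ∈ U)
    (hmul : ∀ A ∈ U, ∀ B ∈ U, A * B ∈ U)
    (hinv : ∀ A ∈ U, ∃ B ∈ U, A * B = 1)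
    (hdiag : ∀ (d : Fin n → Fˣ) (A : Matrix (Fin n) (Fin n) F), A ∈ U →
      Matrix.diagonal (fun i => (d i : F)) * A * Matrix.diagonal (fun i => ((d i)⁻¹ : F)) ∈ U)
    {c : F} (hc0 : c ≠ 0) (hc1 : c ≠ 1) :
    ∀ A ∈ U, ∀ k l : Fin n, k ≠ l → A k l ≠ 0 → ∀ t : F, xelt k l t ∈ U := by
  classical
  suffices haux : ∀ d m : ℕ, m + d = n * n + 1 → ∀ A ∈ U,
      (∀ p : Pr n, p.1 ≠ p.2 → A p.1 p.2 ≠ 0 → m ≤ rnk p) →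
      ∀ k l : Fin n, k ≠ l → A k l ≠ 0 → ∀ t : F, xelt k l t ∈ U by
    intro A hA k l hkl hAkl t
    exact haux (n * n + 1) 0 (by omega) A hA (fun p _ _ => Nat.zero_le _) k l hkl hAkl t
  intro d
  induction d using Nat.strong_induction_on with
  | _ d ih =>
  intro m hmd A hA hbound k l hkl hAkl t
  obtain ⟨hAd1, hAoff⟩ := hsub hA
  set S : Finset (Pr n) :=
    Finset.univ.filter (fun p : Pr n => p.1 ≠ p.2 ∧ A p.1 p.2 ≠ 0) with hS
  have hklS : ((k, l) : Pr n) ∈ S := by simp [hS, hkl, hAkl]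
  obtain ⟨p0, hp0S, hp0min⟩ := Finset.exists_min_image S rnk ⟨_, hklS⟩
  obtain ⟨i, j⟩ := p0
  have hp0' : i ≠ j ∧ A i j ≠ 0 := by simpa [hS] using hp0S
  obtain ⟨hije, hAij⟩ := hp0'
  have hminp : ∀ q : Pr n, q.1 ≠ q.2 → A q.1 q.2 ≠ 0 → rnk ((i, j) : Pr n) ≤ rnk q := by
    intro q h h'; exact hp0min q (by simp [hS, h, h'])
  have hij : i < j := by
    rcases lt_or_ge i j with h | h
    · exact h
    · exact absurd (hAoff i j hije (not_mem_Jfull (not_lt.mpr h))) hAij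
  have hcol : ∀ k' l' : Fin n, k' ≠ l' → l' < j → A k' l' = 0 := by
    intro k' l' h h'
    by_contra h0
    exact absurd (hminp (k', l') h h0) (not_le.mpr (rnk_lt_left h'))
  have hbelow : ∀ k' : Fin n, i < k' → k' ≠ j → A k' j = 0 := by
    intro k' h h'
    by_contra h0
    exact absurd (hminp (k', j) h' h0) (not_le.mpr (rnk_lt_col h))
  have hroot : ∀ t' : F, xelt i j t' ∈ U := by
    have hmem := lemA hsub hmul hinv hdiag hc0 hc1 hA hij hAij hcol hbelow
    have hs0 : (c⁻¹ - 1) * ((c - 1) * A i j) ≠ 0 := by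
      refine mul_ne_zero ?_ (mul_ne_zero (sub_ne_zero.mpr hc1) hAij)
      rw [sub_ne_zero]
      intro h
      exact hc1 (by rw [← inv_inv c, h, inv_one])
    exact fun t' => xelt_scale h1 hdiag (Fin.ne_of_lt hij) hs0 hmem t'
  by_cases hsame : k = i ∧ l = j
  · obtain ⟨rfl, rfl⟩ := hsame; exact hroot t
  · set A' : Matrix (Fin n) (Fin n) F := A * xelt i j (-(A i j)) with hA'
    have hA'U : A' ∈ U := hmul A hA _ (hroot _)
    have hA'app : ∀ a b : Fin n, A' a b = A a b + (if b = j then A a i * (-(A i j)) else 0) :=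
      fun a b => mul_xelt_apply A i j _ a b
    have hA'kl : A' k l ≠ 0 := by
      rw [hA'app]
      rcases eq_or_ne l j with rfl | hlj
      · have hki : k ≠ i := fun h => hsame ⟨h, rfl⟩
        rw [if_pos rfl, hcol k i hki hij, zero_mul, add_zero]
        exact hAkl
      · rw [if_neg hlj, add_zero]; exact hAkl
    have hbound' : ∀ p : Pr n, p.1 ≠ p.2 → A' p.1 p.2 ≠ 0 →
        rnk ((i, j) : Pr n) + 1 ≤ rnk p := by
      intro p hp hp0
      obtain ⟨a, b⟩ := p
      by_contra hcon
      apply hp0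
      have hle : rnk ((a, b) : Pr n) ≤ rnk ((i, j) : Pr n) := by omega
      rcases rnk_le_cases hle with hb | ⟨rfl, hia⟩
      · rw [hA'app, if_neg (Fin.ne_of_lt hb), add_zero]
        exact hcol a b hp hb
      · rcases eq_or_ne a i with rfl | hai
        · rw [hA'app, if_pos rfl, hAd1 a, one_mul]
          ring
        · have hia' : i < a := lt_of_le_of_ne hia (Ne.symm hai)
          have hAai : A a i = 0 :=
            hAoff a i (ne_of_gt hia') (not_mem_Jfull (asymm hia'))
          rw [hA'app, if_pos rfl, hAai, zero_mul, add_zero]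
          exact hbelow a hia' hp
    have hd' : n * n + 1 - (rnk ((i, j) : Pr n) + 1) < d := by
      have h2' := hbound ((i, j) : Pr n) hije hAij
      have h3' := rnk_le ((i, j) : Pr n)
      omega
    exact ih _ hd' (rnk ((i, j) : Pr n) + 1)
      (by have := rnk_le ((i, j) : Pr n); omega) A' hA'U hbound' k l hkl hA'kl t

lemma elimUJ {U : Set (Matrix (Fin n) (Fin n) F)}
    (h1 : (1 : Matrix (Fin n) (Fin n) F) ∈ U)
    (hmul : ∀ A ∈ U, ∀ B ∈ U, A * B ∈ U)
    {J : Finset (Pr n)} (hJsub : ∀ p ∈ J, p.1 < p.2)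
    (hJcl : ∀ a b c' : Fin n, (a, b) ∈ J → (b, c') ∈ J → (a, c') ∈ J)
    (hJroot : ∀ p ∈ J, ∀ t : F, xelt p.1 p.2 t ∈ U) :
    ∀ M ∈ UJ J, M ∈ U := by
  classical
  suffices haux : ∀ d m : ℕ, m + d = n * n + 1 → ∀ M ∈ UJ J,
      (∀ p : Pr n, p.1 ≠ p.2 → M p.1 p.2 ≠ 0 → m ≤ rnk p) → M ∈ U by
    intro M hM
    exact haux (n * n + 1) 0 (by omega) M hM (fun p _ _ => Nat.zero_le _)
  intro d
  induction d using Nat.strong_induction_on with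
  | _ d ih =>
  intro m hmd M hM hbound
  obtain ⟨hMd, hMoff⟩ := hM
  set S : Finset (Pr n) :=
    Finset.univ.filter (fun p : Pr n => p.1 ≠ p.2 ∧ M p.1 p.2 ≠ 0) with hS
  rcases S.eq_empty_or_nonempty with hSe | hSne
  · have hM1 : M = 1 := by
      ext a b
      rcases eq_or_ne a b with rfl | hab
      · rw [hMd a, Matrix.one_apply_eq]
      · rw [Matrix.one_apply_ne hab]
        by_contra h0
        have hmem : ((a, b) : Pr n) ∈ S := by simp [hS, hab, h0]
        rw [hSe] at hmem
        exact absurd hmem (Finset.notMem_empty _)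
    rw [hM1]; exact h1
  · obtain ⟨p0, hp0S, hp0min⟩ := Finset.exists_min_image S rnk hSne
    obtain ⟨i, j⟩ := p0
    have hp0' : i ≠ j ∧ M i j ≠ 0 := by simpa [hS] using hp0S
    obtain ⟨hije, hMij⟩ := hp0'
    have hminp : ∀ q : Pr n, q.1 ≠ q.2 → M q.1 q.2 ≠ 0 → rnk ((i, j) : Pr n) ≤ rnk q := by
      intro q h h'; exact hp0min q (by simp [hS, h, h'])
    have hJij : ((i, j) : Pr n) ∈ J := by
      by_contra h
      exact hMij (hMoff i j hije h)
    have hij : i < j := hJsub _ hJij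
    set M' : Matrix (Fin n) (Fin n) F := M * xelt i j (-(M i j)) with hM'
    have hM'app : ∀ a b : Fin n, M' a b = M a b + (if b = j then M a i * (-(M i j)) else 0) :=
      fun a b => mul_xelt_apply M i j _ a b
    have hMlowJ : ∀ a b : Fin n, ¬ a < b → a ≠ b → M a b = 0 := by
      intro a b h h'
      apply hMoff a b h'
      intro hmem
      exact h (hJsub _ hmem)
    have hM'mem : M' ∈ UJ J := by
      constructor
      · intro a
        rw [hM'app]
        rcases eq_or_ne a j with rfl | haj
        · rw [if_pos rfl, hMlowJ a i (asymm hij) (ne_of_gt hij), zero_mul, add_zero, hMd a]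
        · rw [if_neg haj, add_zero, hMd a]
      · intro a b hab hnJ
        rw [hM'app]
        rcases eq_or_ne b j with rfl | hbj
        · have hai : a ≠ i := by rintro rfl; exact hnJ hJij
          have hMai : M a i = 0 := by
            by_contra h0
            have hmem : ((a, i) : Pr n) ∈ J := by
              by_contra h'
              exact h0 (hMoff a i hai h')
            exact hnJ (hJcl a i b hmem hJij)
          rw [if_pos rfl, hMai, zero_mul, add_zero]
          exact hMoff a b hab hnJ
        · rw [if_neg hbj, add_zero]
          exact hMoff a b hab hnJ
    have hbound' : ∀ p : Pr n, p.1 ≠ p.2 → M' p.1 p.2 ≠ 0 →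
        rnk ((i, j) : Pr n) + 1 ≤ rnk p := by
      intro p hp hp0
      obtain ⟨a, b⟩ := p
      by_contra hcon
      apply hp0
      have hle : rnk ((a, b) : Pr n) ≤ rnk ((i, j) : Pr n) := by omega
      rcases rnk_le_cases hle with hb | ⟨rfl, hia⟩
      · rw [hM'app, if_neg (Fin.ne_of_lt hb), add_zero]
        by_contra h0
        exact absurd (hminp (a, b) hp h0) (not_le.mpr (rnk_lt_left hb))
      · rcases eq_or_ne a i with rfl | hai
        · rw [hM'app, if_pos rfl, hMd a, one_mul]
          ring
        · have hia' : i < a := lt_of_le_of_ne hia (Ne.symm hai)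
          have hMai : M a i = 0 := hMlowJ a i (asymm hia') (ne_of_gt hia')
          have hMaj : M a b = 0 := by
            by_contra h0
            exact absurd (hminp (a, b) hp h0) (not_le.mpr (rnk_lt_col hia'))
          rw [hM'app, if_pos rfl, hMai, zero_mul, add_zero]
          exact hMaj
    have hd' : n * n + 1 - (rnk ((i, j) : Pr n) + 1) < d := by
      have h2' := hbound ((i, j) : Pr n) hije hMij
      have h3' := rnk_le ((i, j) : Pr n)
      omega
    have hM'U : M' ∈ U := ih _ hd' (rnk ((i, j) : Pr n) + 1)
      (by have := rnk_le ((i, j) : Pr n); omega) M' hM'mem hbound'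
    have hMeq : M = M' * xelt i j (M i j) := by
      rw [hM', mul_assoc, xelt_mul i j (Fin.ne_of_lt hij), neg_add_cancel, xelt_zero, mul_one]
    rw [hMeq]
    exact hmul _ hM'U _ (hJroot (i, j) hJij (M i j))

end StmtZeroAux

theorem stmt0 {F : Type*} [Field F] [Fintype F] [DecidableEq F] {n : ℕ}
    (hq : 3 ≤ Fintype.card F)
    (U : Set (Matrix (Fin n) (Fin n) F))
    (hsub : U ⊆ UJ (Jfull n))
    (h1 : (1 : Matrix (Fin n) (Fin n) F) ∈ U)
    (hmul : ∀ A ∈ U, ∀ B ∈ U, A * B ∈ U)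
    (hinv : ∀ A ∈ U, ∃ B ∈ U, A * B = 1) :
    (∃ J : Finset (Pr n), Closed J ∧ U = UJ J) ↔
    ∀ (d : Fin n → Fˣ) (A : Matrix (Fin n) (Fin n) F), A ∈ U →
      Matrix.diagonal (fun i => (d i : F)) * A * Matrix.diagonal (fun i => ((d i)⁻¹ : F)) ∈ U := by
  constructor
  · rintro ⟨J, hJcl, rfl⟩ d A hA
    obtain ⟨hAd, hAoff⟩ := hA
    refine ⟨fun k => ?_, fun k l hkl hnJ => ?_⟩
    · rw [Matrix.mul_diagonal, Matrix.diagonal_mul, hAd k, mul_one]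
      exact mul_inv_cancel₀ (Units.ne_zero _)
    · rw [Matrix.mul_diagonal, Matrix.diagonal_mul, hAoff k l hkl hnJ, mul_zero, zero_mul]
  · intro hdiag
    classical
    have hc : ∃ c : F, c ≠ 0 ∧ c ≠ 1 := by
      by_contra h
      push_neg at h
      have huniv : (Finset.univ : Finset F) ⊆ {0, 1} := by
        intro x _
        rcases eq_or_ne x 0 with rfl | hx
        · simp
        · simp [h x hx]
      have hcard := Finset.card_le_card huniv
      have h2 : ({0, 1} : Finset F).card ≤ 2 :=
        (Finset.card_insert_le _ _).trans (by simp)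
      rw [Finset.card_univ] at hcard
      omega
    obtain ⟨c, hc0, hc1⟩ := hc
    have hkey := keyRoots hsub h1 hmul hinv hdiag hc0 hc1
    set J : Finset (Pr n) := (Jfull n).filter (fun p => ∃ A ∈ U, A p.1 p.2 ≠ 0) with hJdef
    have hJmem : ∀ p : Pr n, p ∈ J ↔ (p.1 < p.2 ∧ ∃ A ∈ U, A p.1 p.2 ≠ 0) := by
      intro p
      rw [hJdef, Finset.mem_filter]
      simp [Jfull]
    have hJsub : ∀ p ∈ J, p.1 < p.2 := fun p hp => ((hJmem p).mp hp).1
    have hJroot : ∀ p ∈ J, ∀ t : F, xelt p.1 p.2 t ∈ U := by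
      intro p hp t
      obtain ⟨hlt, A, hAU, hAp⟩ := (hJmem p).mp hp
      exact hkey A hAU p.1 p.2 (Fin.ne_of_lt hlt) hAp t
    have hJcl2 : ∀ a b c' : Fin n, (a, b) ∈ J → (b, c') ∈ J → (a, c') ∈ J := by
      intro a b c' hab hbc
      have h1' : a < b := hJsub _ hab
      have h2' : b < c' := hJsub _ hbc
      have hx1 := hJroot _ hab (1 : F)
      have hx2 := hJroot _ hbc (1 : F)
      have hx3 := hJroot _ hab (-1 : F)
      have hx4 := hJroot _ hbc (-1 : F)
      have hP : xelt a b (1 : F) * xelt b c' 1 * xelt a b (-1) * xelt b c' (-1) ∈ U :=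
        hmul _ (hmul _ (hmul _ hx1 _ hx2) _ hx3) _ hx4
      rw [xelt_comm h1' h2'] at hP
      refine (hJmem (a, c')).mpr ⟨h1'.trans h2', xelt a c' 1, hP, ?_⟩
      rw [xelt_apply, if_neg (Fin.ne_of_lt (h1'.trans h2')), if_pos ⟨rfl, rfl⟩]
      simp
    refine ⟨J, ⟨hJsub, hJcl2⟩, ?_⟩
    apply Set.Subset.antisymm
    · intro M hMU
      obtain ⟨hMd, hMoff⟩ := hsub hMU
      refine ⟨hMd, fun k l hkl hkJ => ?_⟩
      by_cases hlt : k < l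
      · by_contra h0
        exact hkJ ((hJmem (k, l)).mpr ⟨hlt, M, hMU, h0⟩)
      · exact hMoff k l hkl (not_mem_Jfull hlt)
    · exact fun M hM => elimUJ h1 hmul hJsub hJcl2 hJroot M hM


end SCT
end

section
/- Let J be closed and φ ∈ J*. Then: (a) the right orbit {X_φ · x : x ∈ U_J} of X_φ in 𝔫_J has size q^{rank(M_φ^R)}; (b) the left orbit {x · X_φ : x ∈ U_J} has size q^{rank(M_φ^L)}. -/
open Matrix BigOperators

namespace SCT

variable {F : Type*} [Field F] [Fintype F] [DecidableEq F] {n : ℕ}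

section AuxSCT

variable {F : Type*} [Field F] [Fintype F] [DecidableEq F] {n : ℕ}

/-- Embed coefficients indexed by `J` as a matrix supported on `J`. -/
def embedJ (J : Finset (Pr n)) : ({p // p ∈ J} → F) →ₗ[F] Matrix (Fin n) (Fin n) F where
  toFun v := Matrix.of fun i j => if h : (i, j) ∈ J then v ⟨(i, j), h⟩ else 0
  map_add' u v := by ext i j; by_cases h : (i, j) ∈ J <;> simp [h]
  map_smul' c v := by ext i j; by_cases h : (i, j) ∈ J <;> simp [h]

lemma embedJ_inj (J : Finset (Pr n)) : Function.Injective (embedJ (F := F) J) := by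
  intro u v h
  funext p
  obtain ⟨⟨i, j⟩, hp⟩ := p
  have := congrArg (fun M : Matrix (Fin n) (Fin n) F => M i j) h
  simpa [embedJ, hp] using this

lemma mem_UJ_iff {J : Finset (Pr n)} (hJ : Closed J) (u : Matrix (Fin n) (Fin n) F) :
    u ∈ UJ J ↔ ∃ Z : {p // p ∈ J} → F, u = 1 + embedJ J Z := by
  constructor
  · rintro ⟨h1, h2⟩
    refine ⟨fun p => u p.1.1 p.1.2, ?_⟩
    ext i j
    by_cases hij : i = j
    · subst hij
      have : (i, i) ∉ J := fun h => absurd (hJ.1 _ h) (lt_irrefl i)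
      simp [embedJ, this, h1 i, Matrix.one_apply]
    · by_cases h : (i, j) ∈ J
      · simp [embedJ, h, Matrix.one_apply, hij]
      · simp [embedJ, h, Matrix.one_apply, hij, h2 i j hij h]
  · rintro ⟨Z, rfl⟩
    constructor
    · intro i
      have : (i, i) ∉ J := fun h => absurd (hJ.1 _ h) (lt_irrefl i)
      simp [embedJ, this, Matrix.one_apply]
    · intro i j hij h
      simp [embedJ, h, Matrix.one_apply, hij]

lemma Xmat_mul_embed {J : Finset (Pr n)} (hJ : Closed J) (φ : Pr n → F)
    (Z : {p // p ∈ J} → F) :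
    Xmat J φ * embedJ J Z = embedJ J ((MphiR J φ).mulVec Z) := by
  classical
  set Zext : Pr n → F := fun p => if h : p ∈ J then Z ⟨p, h⟩ else 0 with hZext
  ext i l
  have lhs : (Xmat J φ * embedJ J Z) i l
      = ∑ j : Fin n, (if (i, j) ∈ J then φ (i, j) else 0) * Zext (j, l) := by
    simp [Matrix.mul_apply, Xmat, embedJ, hZext]
  rw [lhs]
  by_cases hil : (i, l) ∈ J
  · have rhs : (embedJ (F := F) J ((MphiR J φ).mulVec Z)) i l
        = ∑ q ∈ J.attach,
            (if (q : Pr n).2 = l ∧ (i, (q : Pr n).1) ∈ J ∧ ((q : Pr n).1, l) ∈ J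
              then φ (i, (q : Pr n).1) else 0) * Zext (q : Pr n) := by
      simp only [embedJ, LinearMap.coe_mk, AddHom.coe_mk, Matrix.of_apply, dif_pos hil,
        Matrix.mulVec, dotProduct, MphiR]
      refine Finset.sum_congr rfl fun q _ => ?_
      simp [hZext, q.2]
    rw [rhs, Finset.sum_attach J (fun p =>
        (if p.2 = l ∧ (i, p.1) ∈ J ∧ (p.1, l) ∈ J then φ (i, p.1) else 0) * Zext p)]
    rw [Finset.sum_subset (Finset.subset_univ J) (by
      intro p _ hp
      simp [hZext, hp])]
    rw [Fintype.sum_prod_type]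
    refine Finset.sum_congr rfl fun j _ => ?_
    rw [Finset.sum_eq_single l]
    · by_cases hij : (i, j) ∈ J
      · by_cases hjl : (j, l) ∈ J
        · simp [hij, hjl]
        · simp [hij, hjl, hZext]
      · simp [hij]
    · intro k _ hk
      simp [hk]
    · simp
  · have rhs : (embedJ (F := F) J ((MphiR J φ).mulVec Z)) i l = 0 := by
      simp [embedJ, hil]
    rw [rhs]
    refine Finset.sum_eq_zero fun j _ => ?_
    by_cases hij : (i, j) ∈ J
    · by_cases hjl : (j, l) ∈ J
      · exact absurd (hJ.2 i j l hij hjl) hil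
      · simp [hZext, hjl]
    · simp [hij]

lemma embed_mul_Xmat {J : Finset (Pr n)} (hJ : Closed J) (φ : Pr n → F)
    (Z : {p // p ∈ J} → F) :
    embedJ J Z * Xmat J φ = embedJ J ((MphiL J φ).mulVec Z) := by
  classical
  set Zext : Pr n → F := fun p => if h : p ∈ J then Z ⟨p, h⟩ else 0 with hZext
  ext i l
  have lhs : (embedJ J Z * Xmat J φ) i l
      = ∑ k : Fin n, Zext (i, k) * (if (k, l) ∈ J then φ (k, l) else 0) := by
    simp [Matrix.mul_apply, Xmat, embedJ, hZext]
  rw [lhs]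
  by_cases hil : (i, l) ∈ J
  · have rhs : (embedJ (F := F) J ((MphiL J φ).mulVec Z)) i l
        = ∑ q ∈ J.attach,
            (if (q : Pr n).1 = i ∧ (i, (q : Pr n).2) ∈ J ∧ ((q : Pr n).2, l) ∈ J
              then φ ((q : Pr n).2, l) else 0) * Zext (q : Pr n) := by
      simp only [embedJ, LinearMap.coe_mk, AddHom.coe_mk, Matrix.of_apply, dif_pos hil,
        Matrix.mulVec, dotProduct, MphiL]
      refine Finset.sum_congr rfl fun q _ => ?_
      simp [hZext, q.2]
    rw [rhs, Finset.sum_attach J (fun p =>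
        (if p.1 = i ∧ (i, p.2) ∈ J ∧ (p.2, l) ∈ J then φ (p.2, l) else 0) * Zext p)]
    rw [Finset.sum_subset (Finset.subset_univ J) (by
      intro p _ hp
      simp [hZext, hp])]
    rw [Fintype.sum_prod_type]
    symm
    rw [Finset.sum_eq_single i]
    · symm
      refine Finset.sum_congr rfl fun k _ => ?_
      by_cases hik : (i, k) ∈ J
      · by_cases hkl : (k, l) ∈ J
        · simp [hik, hkl, mul_comm]
        · simp [hik, hkl, hZext]
      · simp [hik, hZext]
    · intro j _ hj
      refine Finset.sum_eq_zero fun k _ => ?_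
      simp [hj]
    · simp
  · have rhs : (embedJ (F := F) J ((MphiL J φ).mulVec Z)) i l = 0 := by
      simp [embedJ, hil]
    rw [rhs]
    refine Finset.sum_eq_zero fun k _ => ?_
    by_cases hik : (i, k) ∈ J
    · by_cases hkl : (k, l) ∈ J
      · exact absurd (hJ.2 i k l hik hkl) hil
      · simp [hkl]
    · simp [hik, hZext]

lemma card_coset_aux {ι : Type*} [Fintype ι] [DecidableEq ι] (M : Matrix ι ι F)
    (e : (ι → F) →ₗ[F] Matrix (Fin n) (Fin n) F) (he : Function.Injective e)
    (c : Matrix (Fin n) (Fin n) F) :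
    Nat.card {Y : Matrix (Fin n) (Fin n) F | ∃ Z : ι → F, Y = c + e (M.mulVec Z)}
      = Fintype.card F ^ M.rank := by
  classical
  have h1 : {Y : Matrix (Fin n) (Fin n) F | ∃ Z : ι → F, Y = c + e (M.mulVec Z)}
      = (fun w : ι → F => c + e w) '' (LinearMap.range M.mulVecLin : Set (ι → F)) := by
    ext Y
    constructor
    · rintro ⟨Z, rfl⟩
      exact ⟨M.mulVec Z, ⟨Z, rfl⟩, rfl⟩
    · rintro ⟨w, ⟨Z, rfl⟩, rfl⟩
      exact ⟨Z, rfl⟩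
  have hinj : Function.Injective (fun w : ι → F => c + e w) := by
    intro a b h
    exact he (add_left_cancel h)
  rw [h1, Nat.card_image_of_injective hinj, Matrix.rank]
  have key : Nat.card ↥(LinearMap.range M.mulVecLin)
      = Fintype.card F ^ Module.finrank F ↥(LinearMap.range M.mulVecLin) := by
    have h := Module.card_eq_pow_finrank (K := F) (V := ↥(LinearMap.range M.mulVecLin))
    rwa [Nat.card_eq_fintype_card]
  exact key

end AuxSCT

theorem stmt6 {F : Type*} [Field F] [Fintype F] [DecidableEq F] {n : ℕ}
    (J : Finset (Pr n)) (hJ : Closed J) (φ : Pr n → F) :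
    Nat.card {Y : Matrix (Fin n) (Fin n) F |
        ∃ u : Matrix (Fin n) (Fin n) F, u ∈ UJ J ∧ Y = Xmat J φ * u}
      = Fintype.card F ^ (MphiR J φ).rank ∧
    Nat.card {Y : Matrix (Fin n) (Fin n) F |
        ∃ u : Matrix (Fin n) (Fin n) F, u ∈ UJ J ∧ Y = u * Xmat J φ}
      = Fintype.card F ^ (MphiL J φ).rank := by
  constructor
  · have hset : {Y : Matrix (Fin n) (Fin n) F |
        ∃ u : Matrix (Fin n) (Fin n) F, u ∈ UJ J ∧ Y = Xmat J φ * u}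
        = {Y : Matrix (Fin n) (Fin n) F |
            ∃ Z : {p // p ∈ J} → F, Y = Xmat J φ + embedJ J ((MphiR J φ).mulVec Z)} := by
      ext Y
      constructor
      · rintro ⟨u, hu, rfl⟩
        obtain ⟨Z, rfl⟩ := (mem_UJ_iff hJ u).1 hu
        exact ⟨Z, by rw [mul_add, mul_one, Xmat_mul_embed hJ]⟩
      · rintro ⟨Z, rfl⟩
        exact ⟨1 + embedJ J Z, (mem_UJ_iff hJ _).2 ⟨Z, rfl⟩,
          by rw [mul_add, mul_one, Xmat_mul_embed hJ]⟩
    rw [hset]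
    exact card_coset_aux _ _ (embedJ_inj J) _
  · have hset : {Y : Matrix (Fin n) (Fin n) F |
        ∃ u : Matrix (Fin n) (Fin n) F, u ∈ UJ J ∧ Y = u * Xmat J φ}
        = {Y : Matrix (Fin n) (Fin n) F |
            ∃ Z : {p // p ∈ J} → F, Y = Xmat J φ + embedJ J ((MphiL J φ).mulVec Z)} := by
      ext Y
      constructor
      · rintro ⟨u, hu, rfl⟩
        obtain ⟨Z, rfl⟩ := (mem_UJ_iff hJ u).1 hu
        exact ⟨Z, by rw [add_mul, one_mul, embed_mul_Xmat hJ]⟩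
      · rintro ⟨Z, rfl⟩
        exact ⟨1 + embedJ J Z, (mem_UJ_iff hJ _).2 ⟨Z, rfl⟩,
          by rw [add_mul, one_mul, embed_mul_Xmat hJ]⟩
    rw [hset]
    exact card_coset_aux _ _ (embedJ_inj J) _


end SCT
end

section
/- Let J be closed and η, ρ ∈ J*. Then: (a) x_ρ⁻¹ · λ_η = λ_{η'} where η'_{jk} = η_{jk} + Σ_{(i,j,k)∈𝒫} ρ_{ij} η_{ik} for all (j,k) ∈ J; (b) λ_η · x_ρ⁻¹ = λ_{η'} where η'_{jk} = η_{jk} + Σ_{(j,k,l)∈𝒫} ρ_{kl} η_{jl} for all (j,k) ∈ J. -/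
open Matrix BigOperators

namespace SCT

variable {F : Type*} [Field F] [Fintype F] [DecidableEq F] {n : ℕ}

/-- The involution `((j,k),i) ↦ ((i,k),j)` used to reindex triple sums. -/
def swapA (n : ℕ) : (Pr n × Fin n) ≃ (Pr n × Fin n) where
  toFun x := ((x.2, x.1.2), x.1.1)
  invFun x := ((x.2, x.1.2), x.1.1)
  left_inv x := rfl
  right_inv x := rfl

/-- The involution `((j,k),l) ↦ ((j,l),k)` used to reindex triple sums. -/
def swapB (n : ℕ) : (Pr n × Fin n) ≃ (Pr n × Fin n) where
  toFun x := ((x.1.1, x.2), x.1.2)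
  invFun x := ((x.1.1, x.2), x.1.2)
  left_inv x := rfl
  right_inv x := rfl

theorem stmt8 {F : Type*} [Field F] [Fintype F] [DecidableEq F] {n : ℕ}
    (J : Finset (Pr n)) (hJ : Closed J) (η ρ : Pr n → F) :
    (∀ φ : Pr n → F,
      lam J η (xmat J ρ * Xmat J φ) =
      lam J (fun p => η p + ∑ i : Fin n,
          if (i, p.1) ∈ J ∧ (p.1, p.2) ∈ J then ρ (i, p.1) * η (i, p.2) else 0) (Xmat J φ)) ∧
    (∀ φ : Pr n → F,
      lam J η (Xmat J φ * xmat J ρ) =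
      lam J (fun p => η p + ∑ l : Fin n,
          if (p.1, p.2) ∈ J ∧ (p.2, l) ∈ J then ρ (p.2, l) * η (p.1, l) else 0) (Xmat J φ)) := by
  obtain ⟨-, hcl⟩ := hJ
  have hmem : ∀ p : Pr n, (p.1, p.2) ∈ J ↔ p ∈ J := by intro p; rw [Prod.mk.eta]
  constructor
  · intro φ
    have hmul : xmat J ρ * Xmat J φ = Xmat J φ + Xmat J ρ * Xmat J φ := by
      rw [xmat, add_mul, one_mul]
    rw [hmul]
    have hL : lam J η (Xmat J φ + Xmat J ρ * Xmat J φ)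
        = lam J η (Xmat J φ) + ∑ x : Pr n × Fin n,
            (if (x.1.1, x.2) ∈ J ∧ (x.2, x.1.2) ∈ J
              then η x.1 * ρ (x.1.1, x.2) * φ (x.2, x.1.2) else 0) := by
      unfold lam
      simp only [Matrix.add_apply, mul_add]
      rw [Finset.sum_add_distrib]
      congr 1
      calc ∑ p ∈ J, η p * (Xmat J ρ * Xmat J φ) p.1 p.2
          = ∑ p ∈ J, ∑ i : Fin n,
              (if (p.1, i) ∈ J ∧ (i, p.2) ∈ J
                then η p * ρ (p.1, i) * φ (i, p.2) else 0) := by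
            refine Finset.sum_congr rfl fun p _ => ?_
            rw [Matrix.mul_apply, Finset.mul_sum]
            refine Finset.sum_congr rfl fun i _ => ?_
            simp only [Xmat, Matrix.of_apply]
            split_ifs with h1 <;> simp_all <;> ring
        _ = ∑ p : Pr n, ∑ i : Fin n,
              (if (p.1, i) ∈ J ∧ (i, p.2) ∈ J
                then η p * ρ (p.1, i) * φ (i, p.2) else 0) := by
            refine Finset.sum_subset (Finset.subset_univ J) fun p _ hp => ?_
            refine Finset.sum_eq_zero fun i _ => if_neg ?_
            rintro ⟨h1, h2⟩
            exact hp ((hmem p).mp (hcl p.1 i p.2 h1 h2))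
        _ = _ := by simp only [Fintype.sum_prod_type]
    rw [hL]
    have hR : lam J (fun p => η p + ∑ i : Fin n,
          if (i, p.1) ∈ J ∧ (p.1, p.2) ∈ J then ρ (i, p.1) * η (i, p.2) else 0) (Xmat J φ)
        = lam J η (Xmat J φ) + ∑ x : Pr n × Fin n,
            (if (x.2, x.1.1) ∈ J ∧ (x.1.1, x.1.2) ∈ J
              then ρ (x.2, x.1.1) * η (x.2, x.1.2) * φ x.1 else 0) := by
      unfold lam
      simp only [add_mul]
      rw [Finset.sum_add_distrib]
      congr 1
      calc ∑ p ∈ J, (∑ i : Fin n,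
              if (i, p.1) ∈ J ∧ (p.1, p.2) ∈ J then ρ (i, p.1) * η (i, p.2) else 0)
                * Xmat J φ p.1 p.2
          = ∑ p ∈ J, ∑ i : Fin n,
              (if (i, p.1) ∈ J ∧ (p.1, p.2) ∈ J
                then ρ (i, p.1) * η (i, p.2) * φ p else 0) := by
            refine Finset.sum_congr rfl fun p hp => ?_
            rw [Finset.sum_mul]
            refine Finset.sum_congr rfl fun i _ => ?_
            simp only [Xmat, Matrix.of_apply, hmem p, hp]
            split_ifs with h1 <;> simp_all <;> ring
        _ = ∑ p : Pr n, ∑ i : Fin n,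
              (if (i, p.1) ∈ J ∧ (p.1, p.2) ∈ J
                then ρ (i, p.1) * η (i, p.2) * φ p else 0) := by
            refine Finset.sum_subset (Finset.subset_univ J) fun p _ hp => ?_
            refine Finset.sum_eq_zero fun i _ => if_neg ?_
            rintro ⟨-, h2⟩
            exact hp ((hmem p).mp h2)
        _ = _ := by simp only [Fintype.sum_prod_type]
    rw [hR]
    congr 1
    refine Fintype.sum_equiv (swapA n) _ _ fun x => ?_
    simp only [swapA, Equiv.coe_fn_mk]
    split_ifs with h1
    · simp only [Prod.mk.eta, h1, and_self, ↓reduceIte]; ring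
    · exact (if_neg h1).symm
  · intro φ
    have hmul : Xmat J φ * xmat J ρ = Xmat J φ + Xmat J φ * Xmat J ρ := by
      rw [xmat, mul_add, mul_one]
    rw [hmul]
    have hL : lam J η (Xmat J φ + Xmat J φ * Xmat J ρ)
        = lam J η (Xmat J φ) + ∑ x : Pr n × Fin n,
            (if (x.1.1, x.2) ∈ J ∧ (x.2, x.1.2) ∈ J
              then η x.1 * φ (x.1.1, x.2) * ρ (x.2, x.1.2) else 0) := by
      unfold lam
      simp only [Matrix.add_apply, mul_add]
      rw [Finset.sum_add_distrib]
      congr 1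
      calc ∑ p ∈ J, η p * (Xmat J φ * Xmat J ρ) p.1 p.2
          = ∑ p ∈ J, ∑ l : Fin n,
              (if (p.1, l) ∈ J ∧ (l, p.2) ∈ J
                then η p * φ (p.1, l) * ρ (l, p.2) else 0) := by
            refine Finset.sum_congr rfl fun p _ => ?_
            rw [Matrix.mul_apply, Finset.mul_sum]
            refine Finset.sum_congr rfl fun l _ => ?_
            simp only [Xmat, Matrix.of_apply]
            split_ifs with h1 <;> simp_all <;> ring
        _ = ∑ p : Pr n, ∑ l : Fin n,
              (if (p.1, l) ∈ J ∧ (l, p.2) ∈ J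
                then η p * φ (p.1, l) * ρ (l, p.2) else 0) := by
            refine Finset.sum_subset (Finset.subset_univ J) fun p _ hp => ?_
            refine Finset.sum_eq_zero fun l _ => if_neg ?_
            rintro ⟨h1, h2⟩
            exact hp ((hmem p).mp (hcl p.1 l p.2 h1 h2))
        _ = _ := by simp only [Fintype.sum_prod_type]
    rw [hL]
    have hR : lam J (fun p => η p + ∑ l : Fin n,
          if (p.1, p.2) ∈ J ∧ (p.2, l) ∈ J then ρ (p.2, l) * η (p.1, l) else 0) (Xmat J φ)
        = lam J η (Xmat J φ) + ∑ x : Pr n × Fin n,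
            (if (x.1.1, x.1.2) ∈ J ∧ (x.1.2, x.2) ∈ J
              then ρ (x.1.2, x.2) * η (x.1.1, x.2) * φ x.1 else 0) := by
      unfold lam
      simp only [add_mul]
      rw [Finset.sum_add_distrib]
      congr 1
      calc ∑ p ∈ J, (∑ l : Fin n,
              if (p.1, p.2) ∈ J ∧ (p.2, l) ∈ J then ρ (p.2, l) * η (p.1, l) else 0)
                * Xmat J φ p.1 p.2
          = ∑ p ∈ J, ∑ l : Fin n,
              (if (p.1, p.2) ∈ J ∧ (p.2, l) ∈ J
                then ρ (p.2, l) * η (p.1, l) * φ p else 0) := by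
            refine Finset.sum_congr rfl fun p hp => ?_
            rw [Finset.sum_mul]
            refine Finset.sum_congr rfl fun l _ => ?_
            simp only [Xmat, Matrix.of_apply, hmem p, hp]
            split_ifs with h1 <;> simp_all <;> ring
        _ = ∑ p : Pr n, ∑ l : Fin n,
              (if (p.1, p.2) ∈ J ∧ (p.2, l) ∈ J
                then ρ (p.2, l) * η (p.1, l) * φ p else 0) := by
            refine Finset.sum_subset (Finset.subset_univ J) fun p _ hp => ?_
            refine Finset.sum_eq_zero fun l _ => if_neg ?_
            rintro ⟨h1, -⟩
            exact hp ((hmem p).mp h1)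
        _ = _ := by simp only [Fintype.sum_prod_type]
    rw [hR]
    congr 1
    refine Fintype.sum_equiv (swapB n) _ _ fun x => ?_
    simp only [swapB, Equiv.coe_fn_mk]
    split_ifs with h1
    · simp only [Prod.mk.eta, h1, and_self, ↓reduceIte]; ring
    · exact (if_neg h1).symm

end SCT
end

section
/- Let J be closed and η, τ, ρ ∈ J*. If λ_{η'} = x_τ⁻¹ · λ_η · x_ρ⁻¹, then for all (j,k) ∈ J, η'_{jk} = η_{jk} + Σ_{(i,j,k)∈𝒫} τ_{ij} η_{ik} + Σ_{(j,k,l)∈𝒫} η_{jl} ρ_{kl} + Σ_{(i,j,k,l)∈𝒫} τ_{ij} η_{il} ρ_{kl}. -/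
open Matrix BigOperators

namespace SCT

variable {F : Type*} [Field F] [Fintype F] [DecidableEq F] {n : ℕ}

theorem stmt9 {F : Type*} [Field F] [Fintype F] [DecidableEq F] {n : ℕ}
    (J : Finset (Pr n)) (hJ : Closed J) (η τ ρ η' : Pr n → F)
    (h : ∀ φ : Pr n → F,
      lam J η' (Xmat J φ) = lam J η (xmat J τ * Xmat J φ * xmat J ρ)) :
    ∀ p ∈ J, η' p = η p
      + (∑ i : Fin n, if (i, p.1) ∈ J ∧ (p.1, p.2) ∈ J then τ (i, p.1) * η (i, p.2) else 0)
      + (∑ l : Fin n, if (p.1, p.2) ∈ J ∧ (p.2, l) ∈ J then η (p.1, l) * ρ (p.2, l) else 0)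
      + ∑ i : Fin n, ∑ l : Fin n,
          if (i, p.1) ∈ J ∧ (p.1, p.2) ∈ J ∧ (p.2, l) ∈ J then
            τ (i, p.1) * η (i, l) * ρ (p.2, l) else 0 := by
  classical
  rintro ⟨j, k⟩ hjk
  set φ : Pr n → F := fun q => if q = (j, k) then (1 : F) else 0 with hφdef
  -- X_φ is the standard basis matrix
  have hXE : Xmat J φ = Matrix.single j k (1 : F) := by
    ext a b
    simp only [Xmat, Matrix.of_apply, hφdef, Matrix.single, Prod.mk.injEq]
    by_cases h1 : a = j <;> by_cases h2 : b = k
    · subst h1; subst h2; simp [hjk]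
    · have h2' : ¬(k = b) := fun hh => h2 hh.symm
      simp [h1, h2, h2']
    · have h1' : ¬(j = a) := fun hh => h1 hh.symm
      simp [h1, h2, h1']
    · have h1' : ¬(j = a) := fun hh => h1 hh.symm
      simp [h1, h2, h1']
  -- entry formula for the conjugated matrix
  have hMentry : ∀ a b : Fin n, (xmat J τ * Xmat J φ * xmat J ρ) a b =
      ((if a = j then (1 : F) else 0) + (if (a, j) ∈ J then τ (a, j) else 0)) *
      ((if k = b then (1 : F) else 0) + (if (k, b) ∈ J then ρ (k, b) else 0)) := by
    intro a b
    rw [hXE]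
    have hAE : ∀ c : Fin n, (xmat J τ * Matrix.single j k (1 : F)) a c =
        if c = k then (xmat J τ) a j else 0 := by
      intro c
      by_cases hc : c = k
      · subst hc
        rw [Matrix.mul_single_apply_same, mul_one, if_pos rfl]
      · rw [Matrix.mul_single_apply_of_ne (1:F) j k a c hc, if_neg hc]
    rw [Matrix.mul_apply]
    rw [Finset.sum_congr rfl (fun c _ => by rw [hAE c])]
    rw [Finset.sum_eq_single k]
    · simp [xmat, Xmat, Matrix.add_apply, Matrix.one_apply]
    · intro c _ hc; rw [if_neg hc, zero_mul]
    · simp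
  -- compute the LHS of h φ
  have hL : lam J η' (Xmat J φ) = η' (j, k) := by
    rw [lam]
    rw [Finset.sum_congr rfl (fun q hq => by
      show η' q * Xmat J φ q.1 q.2 = if q = (j, k) then η' q else 0
      obtain ⟨a, b⟩ := q
      simp only [Xmat, Matrix.of_apply, hφdef]
      rw [if_pos hq]
      by_cases hqp : (a, b) = (j, k) <;> simp [hqp])]
    rw [Finset.sum_ite_eq' J (j, k) η', if_pos hjk]
  -- expand a sum over J into a double sum over all indices
  have expand : ∀ f : Pr n → F, ∑ q ∈ J, f q =
      ∑ a : Fin n, ∑ b : Fin n, if (a, b) ∈ J then f (a, b) else 0 := by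
    intro f
    have h0 : ∑ q ∈ J, f q = ∑ q : Pr n, if q ∈ J then f q else 0 := by
      rw [Finset.sum_ite_mem, Finset.univ_inter]
    rw [h0, Fintype.sum_prod_type]
  -- the key termwise expansion
  have key : ∀ q ∈ J, η q * (xmat J τ * Xmat J φ * xmat J ρ) q.1 q.2 =
      (if q = (j, k) then η q else 0)
      + (if k = q.2 ∧ (q.1, j) ∈ J then η q * τ (q.1, j) else 0)
      + (if q.1 = j ∧ (k, q.2) ∈ J then η q * ρ (k, q.2) else 0)
      + (if (q.1, j) ∈ J ∧ (k, q.2) ∈ J then η q * τ (q.1, j) * ρ (k, q.2) else 0) := by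
    have hjj : (j, j) ∉ J := fun hh => lt_irrefl j (hJ.1 _ hh)
    have hkk : (k, k) ∉ J := fun hh => lt_irrefl k (hJ.1 _ hh)
    rintro ⟨a, b⟩ _
    rw [hMentry a b]
    by_cases h1 : a = j <;> by_cases h3 : k = b
    · subst h1; subst h3; simp [hjj, hkk]
    · subst h1
      have h3' : ¬b = k := fun hh => h3 hh.symm
      by_cases h4 : (k, b) ∈ J <;> simp [hjj, h3, h3', h4, Prod.ext_iff] <;> ring
    · subst h3
      have h1' : ¬j = a := fun hh => h1 hh.symm
      by_cases h2 : (a, j) ∈ J <;> simp [hkk, h1, h1', h2, Prod.ext_iff] <;> ring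
    · have h3' : ¬b = k := fun hh => h3 hh.symm
      by_cases h2 : (a, j) ∈ J <;> by_cases h4 : (k, b) ∈ J <;>
        simp [h1, h2, h3, h3', h4, Prod.ext_iff] <;> ring
  have hh := h φ
  rw [hL, lam, Finset.sum_congr rfl key] at hh
  simp only [Finset.sum_add_distrib] at hh
  rw [hh]
  congr 1
  · congr 1
    · congr 1
      · rw [Finset.sum_ite_eq' J (j, k) η, if_pos hjk]
      · -- τ term
        rw [expand]
        refine Finset.sum_congr rfl fun a _ => ?_
        rw [Finset.sum_eq_single k]
        · by_cases h2 : (a, j) ∈ J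
          · have hak : (a, k) ∈ J := hJ.2 a j k h2 hjk
            rw [if_pos hak, if_pos ⟨rfl, h2⟩, if_pos ⟨h2, hjk⟩]; ring
          · simp [h2]
        · intro b _ hb; simp [Ne.symm hb]
        · simp
    · -- ρ term
      rw [expand]
      rw [Finset.sum_eq_single j]
      · refine Finset.sum_congr rfl fun b _ => ?_
        by_cases h4 : (k, b) ∈ J
        · have hjb : (j, b) ∈ J := hJ.2 j k b hjk h4
          rw [if_pos hjb, if_pos ⟨rfl, h4⟩, if_pos ⟨hjk, h4⟩]
        · simp [h4]
      · intro a _ ha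
        refine Finset.sum_eq_zero fun b _ => ?_
        simp [ha]
      · simp
  · -- double term
    rw [expand]
    refine Finset.sum_congr rfl fun a _ => Finset.sum_congr rfl fun b _ => ?_
    by_cases h2 : (a, j) ∈ J <;> by_cases h4 : (k, b) ∈ J
    · have hab : (a, b) ∈ J := hJ.2 a k b (hJ.2 a j k h2 hjk) h4
      rw [if_pos hab, if_pos ⟨h2, h4⟩, if_pos ⟨h2, hjk, h4⟩]; ring
    all_goals simp [h2, h4]

end SCT
end

section
/- Let J be closed and η ∈ J*. Then rank(M_L^η) = rank(M_R^η), so the corank of η is well defined. -/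
open Matrix BigOperators

namespace SCT

variable {F : Type*} [Field F] [Fintype F] [DecidableEq F] {n : ℕ}

theorem stmt10 {F : Type*} [Field F] [Fintype F] [DecidableEq F] {n : ℕ}
    (J : Finset (Pr n)) (hJ : Closed J) (η : Pr n → F) :
    (MetaL J η).rank = (MetaR J η).rank := by
  have h : MetaR J η = (MetaL J η)ᵀ := by
    ext p q
    obtain ⟨⟨p1, p2⟩, hp⟩ := p
    obtain ⟨⟨q1, q2⟩, hq⟩ := q
    simp only [MetaR, MetaL, Matrix.transpose_apply, Matrix.of_apply]
    by_cases h1 : q1 = p2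
    · subst h1
      simp [hp, hq]
    · have h2 : ¬ p2 = q1 := fun h => h1 h.symm
      simp [h1, h2]
  rw [h, Matrix.rank_transpose]

end SCT
end

section
/- Let J be closed and η ∈ J*. Then: (a) the right orbit {λ_η · x : x ∈ U_J} of λ_η in 𝔫_J* has size q^{corank(η)}; (b) the left orbit {x · λ_η : x ∈ U_J} also has size q^{corank(η)}. -/
open Matrix BigOperators

namespace SCT

variable {F : Type*} [Field F] [Fintype F] [DecidableEq F] {n : ℕ}

set_option linter.unusedSectionVars false

-- basic algebra lemmas
lemma nJ_mul {J : Finset (Pr n)} (hJ : Closed J)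
    {X Y : Matrix (Fin n) (Fin n) F} (hX : X ∈ nJset J) (hY : Y ∈ nJset J) :
    X * Y ∈ nJset J := by
  intro i j hij
  rw [Matrix.mul_apply]
  apply Finset.sum_eq_zero
  intro k _
  by_cases h1 : (i, k) ∈ J
  · by_cases h2 : (k, j) ∈ J
    · exact absurd (hJ.2 i k j h1 h2) hij
    · rw [hY _ _ h2, mul_zero]
  · rw [hX _ _ h1, zero_mul]

lemma nJ_pow_entry {J : Finset (Pr n)} (hJ : Closed J)
    {X : Matrix (Fin n) (Fin n) F} (hX : X ∈ nJset J) :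
    ∀ (k : ℕ) (i j : Fin n), (X ^ k) i j ≠ 0 → (i : ℕ) + k ≤ (j : ℕ) := by
  intro k
  induction k with
  | zero =>
    intro i j h
    rw [pow_zero] at h
    by_cases hij : i = j
    · subst hij; omega
    · exact absurd (Matrix.one_apply_ne hij) h
  | succ k ih =>
    intro i j h
    rw [pow_succ, Matrix.mul_apply] at h
    obtain ⟨m, -, hm⟩ := Finset.exists_ne_zero_of_sum_ne_zero h
    have h1 : (X ^ k) i m ≠ 0 := fun h0 => hm (by rw [h0, zero_mul])
    have h2 : X m j ≠ 0 := fun h0 => hm (by rw [h0, mul_zero])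
    have hmem : (m, j) ∈ J := by
      by_contra hc; exact h2 (hX _ _ hc)
    have hlt : ((m : ℕ)) < (j : ℕ) := hJ.1 _ hmem
    have := ih i m h1
    omega

lemma nJ_pow_zero {J : Finset (Pr n)} (hJ : Closed J)
    {X : Matrix (Fin n) (Fin n) F} (hX : X ∈ nJset J) : X ^ n = 0 := by
  ext i j
  by_contra h
  have := nJ_pow_entry hJ hX n i j h
  have := j.isLt
  omega

lemma nJ_neg {J : Finset (Pr n)} {X : Matrix (Fin n) (Fin n) F} (hX : X ∈ nJset J) :
    -X ∈ nJset J := fun i j hij => by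
  rw [Matrix.neg_apply, hX _ _ hij, neg_zero]

lemma nJ_pow_mem {J : Finset (Pr n)} (hJ : Closed J)
    {X : Matrix (Fin n) (Fin n) F} (hX : X ∈ nJset J) :
    ∀ k : ℕ, 1 ≤ k → X ^ k ∈ nJset J := by
  intro k
  induction k with
  | zero => omega
  | succ k ih =>
    intro _
    rcases Nat.eq_or_lt_of_le (Nat.one_le_iff_ne_zero.mpr (Nat.succ_ne_zero k)) with h | h
    · rw [pow_succ]
      rcases Nat.eq_zero_or_pos k with hk | hk
      · subst hk; rw [pow_zero, one_mul]; exact hX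
      · exact nJ_mul hJ (ih hk) hX
    · rw [pow_succ]
      rcases Nat.eq_zero_or_pos k with hk | hk
      · subst hk; rw [pow_zero, one_mul]; exact hX
      · exact nJ_mul hJ (ih hk) hX

lemma diag_not_mem {J : Finset (Pr n)} (hJ : Closed J) (i : Fin n) : (i, i) ∉ J :=
  fun h => lt_irrefl i (hJ.1 _ h)

lemma exists_inv {J : Finset (Pr n)} (hJ : Closed J)
    {X : Matrix (Fin n) (Fin n) F} (hX : X ∈ nJset J) :
    ∃ Y ∈ nJset J, (1 + X) * (1 + Y) = 1 ∧ (1 + Y) * (1 + X) = 1 := by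
  set S : Matrix (Fin n) (Fin n) F := ∑ k ∈ Finset.range n, (-X) ^ k with hS
  have hXn : (-X) ^ n = 0 := by
    rw [neg_pow, nJ_pow_zero hJ hX, mul_zero]
  have h1S : 1 + (S - 1) = S := by abel
  refine ⟨S - 1, ?_, ?_, ?_⟩
  · intro i j hij
    have hsum : ∀ k ∈ Finset.range n, 1 ≤ k → ((-X) ^ k) i j = 0 := fun k _ hk =>
      nJ_pow_mem hJ (nJ_neg hX) k hk _ _ hij
    rw [Matrix.sub_apply, hS, Matrix.sum_apply]
    by_cases hn : 0 ∈ Finset.range n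
    · rw [← Finset.add_sum_erase _ _ hn]
      rw [Finset.sum_eq_zero fun k hk => hsum k (Finset.mem_of_mem_erase hk)
        (Nat.one_le_iff_ne_zero.mpr (Finset.ne_of_mem_erase hk))]
      simp [pow_zero]
    · simp only [Finset.mem_range] at hn
      have := i.isLt
      omega
  · rw [h1S]
    have hgs := mul_geom_sum (-X) n
    rw [← hS, hXn] at hgs
    have h2 : (1 + X) * S = -((-X - 1) * S) := by
      rw [neg_mul_eq_neg_mul]
      congr 1
      abel
    rw [h2, hgs]
    simp
  · rw [h1S]
    have hgs := geom_sum_mul (-X) n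
    rw [← hS, hXn] at hgs
    have h2 : S * (1 + X) = -(S * (-X - 1)) := by
      rw [← mul_neg]
      congr 1
      abel
    rw [h2, hgs]
    simp

lemma UJ_sub_one {J : Finset (Pr n)} {u : Matrix (Fin n) (Fin n) F} (hu : u ∈ UJ J) :
    u - 1 ∈ nJset J := by
  intro i j hij
  rw [Matrix.sub_apply]
  by_cases h : i = j
  · subst h; rw [hu.1 i, Matrix.one_apply_eq, sub_self]
  · rw [hu.2 i j h hij, Matrix.one_apply_ne h, sub_zero]

lemma one_add_mem_UJ {J : Finset (Pr n)} (hJ : Closed J)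
    {X : Matrix (Fin n) (Fin n) F} (hX : X ∈ nJset J) : (1 + X) ∈ UJ J := by
  constructor
  · intro i
    rw [Matrix.add_apply, Matrix.one_apply_eq, hX i i (diag_not_mem hJ i), add_zero]
  · intro i j hne hnot
    rw [Matrix.add_apply, Matrix.one_apply_ne hne, hX i j hnot, add_zero]

lemma UJ_inv {J : Finset (Pr n)} (hJ : Closed J)
    {u : Matrix (Fin n) (Fin n) F} (hu : u ∈ UJ J) :
    ∃ Y ∈ nJset J, u⁻¹ = 1 + Y ∧ u * (1 + Y) = 1 ∧ (1 + Y) * u = 1 := by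
  obtain ⟨Y, hY, h1, h2⟩ := exists_inv hJ (UJ_sub_one hu)
  rw [add_sub_cancel] at h1 h2
  exact ⟨Y, hY, Matrix.inv_eq_right_inv h1, h1, h2⟩


lemma lamSub_Xmat (J : Finset (Pr n)) (v : {p // p ∈ J} → F) (φ : Pr n → F) :
    lamSub J v (Xmat J φ) = ∑ p ∈ J.attach, v p * φ p.1 := by
  unfold lamSub Xmat
  apply Finset.sum_congr rfl
  intro p _
  rw [Matrix.of_apply]
  have : (p.1.1, p.1.2) = p.1 := rfl
  rw [this, if_pos p.2]

lemma lamSub_indicator (J : Finset (Pr n)) (v : {p // p ∈ J} → F) (q : {p // p ∈ J}) :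
    lamSub J v (Xmat J (fun p => if p = q.1 then (1 : F) else 0)) = v q := by
  rw [lamSub_Xmat]
  have : ∀ p ∈ J.attach, v p * (if p.1 = q.1 then (1:F) else 0)
      = if p = q then v p else 0 := by
    intro p _
    by_cases h : p = q
    · subst h; simp
    · rw [if_neg (fun hc => h (Subtype.ext hc)), if_neg h, mul_zero]
  rw [Finset.sum_congr rfl this, Finset.sum_ite_eq' _ q v, if_pos (Finset.mem_attach _ _)]

lemma lamSub_funext (J : Finset (Pr n)) {a b : {p // p ∈ J} → F}
    (h : ∀ φ : Pr n → F, lamSub J a (Xmat J φ) = lamSub J b (Xmat J φ)) : a = b := by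
  funext q
  rw [← lamSub_indicator J a q, ← lamSub_indicator J b q, h]

lemma key_right {J : Finset (Pr n)} (hJ : Closed J) (η : Pr n → F)
    {Y : Matrix (Fin n) (Fin n) F} (hY : Y ∈ nJset J) (φ : Pr n → F) :
    lamSub J (fun q => η q.1 + (MetaR J η).mulVec (fun r => Y r.1.1 r.1.2) q) (Xmat J φ)
      = lam J η (Xmat J φ * (1 + Y)) := by
  rw [lamSub_Xmat]
  unfold lam
  rw [mul_add, mul_one]
  simp only [Matrix.add_apply, mul_add, add_mul, Finset.sum_add_distrib]
  congr 1
  · rw [← Finset.sum_attach J (fun p => η p * Xmat J φ p.1 p.2)]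
    apply Finset.sum_congr rfl
    intro q _
    unfold Xmat
    rw [Matrix.of_apply]
    have : (q.1.1, q.1.2) = q.1 := rfl
    rw [this, if_pos q.2]
  · -- the quadratic terms
    have hL : ∀ q : {p // p ∈ J}, (MetaR J η).mulVec (fun r => Y r.1.1 r.1.2) q
        = ∑ b ∈ J, if b.1 = q.1.2 then η (q.1.1, b.2) * Y b.1 b.2 else 0 := by
      intro q
      rw [Matrix.mulVec, dotProduct, Finset.univ_eq_attach]
      rw [← Finset.sum_attach J (fun b => if b.1 = q.1.2 then η (q.1.1, b.2) * Y b.1 b.2 else 0)]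
      apply Finset.sum_congr rfl
      intro r _
      unfold MetaR
      rw [Matrix.of_apply]
      by_cases h : r.1.1 = q.1.2
      · have h2 : (q.1.1, q.1.2) ∈ J := by
          have : (q.1.1, q.1.2) = q.1 := rfl
          rw [this]; exact q.2
        have h3 : (q.1.2, r.1.2) ∈ J := by
          rw [← h]
          have : (r.1.1, r.1.2) = r.1 := rfl
          rw [this]; exact r.2
        rw [if_pos ⟨h, h2, h3⟩, if_pos h]
      · rw [if_neg (fun hc => h hc.1), if_neg h, zero_mul]
    calc ∑ q ∈ J.attach, (MetaR J η).mulVec (fun r => Y r.1.1 r.1.2) q * φ q.1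
        = ∑ a ∈ J, ∑ b ∈ J, if b.1 = a.2 then η (a.1, b.2) * Y b.1 b.2 * φ a else 0 := by
          rw [← Finset.sum_attach J (fun a => ∑ b ∈ J,
            if b.1 = a.2 then η (a.1, b.2) * Y b.1 b.2 * φ a else 0)]
          apply Finset.sum_congr rfl
          intro q _
          rw [hL q, Finset.sum_mul]
          apply Finset.sum_congr rfl
          intro b _
          rw [ite_mul, zero_mul]
      _ = ∑ x ∈ (J ×ˢ J).filter (fun x => x.2.1 = x.1.2),
            η (x.1.1, x.2.2) * Y x.2.1 x.2.2 * φ x.1 := by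
          rw [Finset.sum_filter, Finset.sum_product]
      _ = ∑ x ∈ ((J ×ˢ (Finset.univ : Finset (Fin n))).filter
              (fun x => (x.1.1, x.2) ∈ J)).filter (fun x => (x.2, x.1.2) ∈ J),
            η x.1 * Y x.2 x.1.2 * φ (x.1.1, x.2) := by
          apply Finset.sum_nbij' (i := fun x : Pr n × Pr n => ((x.1.1, x.2.2), x.2.1))
            (j := fun y : Pr n × Fin n => ((y.1.1, y.2), (y.2, y.1.2)))
          · intro x hx
            simp only [Finset.mem_filter, Finset.mem_product] at hx ⊢
            obtain ⟨⟨h1, h2⟩, h3⟩ := hx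
            have e1 : (x.1.1, x.2.1) = x.1 := by rw [h3]
            refine ⟨⟨⟨hJ.2 _ _ _ (e1 ▸ h1) ?_, Finset.mem_univ _⟩, e1 ▸ h1⟩, ?_⟩
            · show (x.2.1, x.2.2) ∈ J
              simpa using h2
            · show (x.2.1, x.2.2) ∈ J
              simpa using h2
          · intro y hy
            simp only [Finset.mem_filter, Finset.mem_product] at hy ⊢
            exact ⟨⟨hy.1.2, hy.2⟩, trivial⟩
          · intro x hx
            simp only [Finset.mem_filter, Finset.mem_product] at hx
            obtain ⟨⟨a, b⟩, c, d⟩ := x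
            obtain ⟨⟨h1, h2⟩, h3⟩ := hx
            simp only at h3
            subst h3
            rfl
          · intro y hy
            rfl
          · intro x hx
            simp only [Finset.mem_filter, Finset.mem_product] at hx
            obtain ⟨⟨h1, h2⟩, h3⟩ := hx
            show η (x.1.1, x.2.2) * Y x.2.1 x.2.2 * φ x.1
              = η (x.1.1, x.2.2) * Y x.2.1 x.2.2 * φ (x.1.1, x.2.1)
            rw [show (x.1.1, x.2.1) = x.1 by rw [h3]]
      _ = ∑ x ∈ (J ×ˢ (Finset.univ : Finset (Fin n))).filter (fun x => (x.1.1, x.2) ∈ J),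
            η x.1 * Y x.2 x.1.2 * φ (x.1.1, x.2) := by
          apply Finset.sum_subset (Finset.filter_subset _ _)
          intro x hx hx'
          have : (x.2, x.1.2) ∉ J := by
            intro hc
            exact hx' (Finset.mem_filter.mpr ⟨hx, hc⟩)
          rw [hY _ _ this, mul_zero, zero_mul]
      _ = ∑ p ∈ J, η p * (Xmat J φ * Y) p.1 p.2 := by
          rw [Finset.sum_filter, Finset.sum_product]
          apply Finset.sum_congr rfl
          intro p _
          rw [Matrix.mul_apply, Finset.mul_sum]
          apply Finset.sum_congr rfl
          intro m _
          unfold Xmat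
          rw [Matrix.of_apply]
          by_cases h : (p.1, m) ∈ J
          · rw [if_pos h, if_pos h]; ring
          · rw [if_neg h, if_neg h, zero_mul, mul_zero]

lemma key_left {J : Finset (Pr n)} (hJ : Closed J) (η : Pr n → F)
    {Y : Matrix (Fin n) (Fin n) F} (hY : Y ∈ nJset J) (φ : Pr n → F) :
    lamSub J (fun q => η q.1 + (MetaL J η).mulVec (fun r => Y r.1.1 r.1.2) q) (Xmat J φ)
      = lam J η ((1 + Y) * Xmat J φ) := by
  rw [lamSub_Xmat]
  unfold lam
  rw [add_mul, one_mul]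
  simp only [Matrix.add_apply, mul_add, add_mul, Finset.sum_add_distrib]
  congr 1
  · rw [← Finset.sum_attach J (fun p => η p * Xmat J φ p.1 p.2)]
    apply Finset.sum_congr rfl
    intro q _
    unfold Xmat
    rw [Matrix.of_apply]
    have : (q.1.1, q.1.2) = q.1 := rfl
    rw [this, if_pos q.2]
  · have hL : ∀ q : {p // p ∈ J}, (MetaL J η).mulVec (fun r => Y r.1.1 r.1.2) q
        = ∑ b ∈ J, if b.2 = q.1.1 then η (b.1, q.1.2) * Y b.1 b.2 else 0 := by
      intro q
      rw [Matrix.mulVec, dotProduct, Finset.univ_eq_attach]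
      rw [← Finset.sum_attach J (fun b => if b.2 = q.1.1 then η (b.1, q.1.2) * Y b.1 b.2 else 0)]
      apply Finset.sum_congr rfl
      intro r _
      unfold MetaL
      rw [Matrix.of_apply]
      by_cases h : r.1.2 = q.1.1
      · have h2 : (q.1.1, q.1.2) ∈ J := by
          have : (q.1.1, q.1.2) = q.1 := rfl
          rw [this]; exact q.2
        have h3 : (r.1.1, q.1.1) ∈ J := by
          rw [← h]
          have : (r.1.1, r.1.2) = r.1 := rfl
          rw [this]; exact r.2
        rw [if_pos ⟨h, h3, h2⟩, if_pos h]
      · rw [if_neg (fun hc => h hc.1), if_neg h, zero_mul]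
    calc ∑ q ∈ J.attach, (MetaL J η).mulVec (fun r => Y r.1.1 r.1.2) q * φ q.1
        = ∑ a ∈ J, ∑ b ∈ J, if b.2 = a.1 then η (b.1, a.2) * Y b.1 b.2 * φ a else 0 := by
          rw [← Finset.sum_attach J (fun a => ∑ b ∈ J,
            if b.2 = a.1 then η (b.1, a.2) * Y b.1 b.2 * φ a else 0)]
          apply Finset.sum_congr rfl
          intro q _
          rw [hL q, Finset.sum_mul]
          apply Finset.sum_congr rfl
          intro b _
          rw [ite_mul, zero_mul]
      _ = ∑ x ∈ (J ×ˢ J).filter (fun x => x.2.2 = x.1.1),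
            η (x.2.1, x.1.2) * Y x.2.1 x.2.2 * φ x.1 := by
          rw [Finset.sum_filter, Finset.sum_product]
      _ = ∑ y ∈ ((J ×ˢ (Finset.univ : Finset (Fin n))).filter
              (fun y => (y.2, y.1.2) ∈ J)).filter (fun y => (y.1.1, y.2) ∈ J),
            η y.1 * Y y.1.1 y.2 * φ (y.2, y.1.2) := by
          apply Finset.sum_nbij' (i := fun x : Pr n × Pr n => ((x.2.1, x.1.2), x.1.1))
            (j := fun y : Pr n × Fin n => ((y.2, y.1.2), (y.1.1, y.2)))
          · intro x hx
            simp only [Finset.mem_filter, Finset.mem_product] at hx ⊢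
            obtain ⟨⟨h1, h2⟩, h3⟩ := hx
            have e1 : (x.2.1, x.1.1) = x.2 := by rw [← h3]
            have e2 : (x.1.1, x.1.2) = x.1 := rfl
            exact ⟨⟨⟨hJ.2 _ _ _ (e1 ▸ h2) (e2 ▸ h1), Finset.mem_univ _⟩, e2 ▸ h1⟩, e1 ▸ h2⟩
          · intro y hy
            simp only [Finset.mem_filter, Finset.mem_product] at hy ⊢
            exact ⟨⟨hy.1.2, hy.2⟩, trivial⟩
          · intro x hx
            simp only [Finset.mem_filter, Finset.mem_product] at hx
            obtain ⟨⟨a, b⟩, c, d⟩ := x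
            obtain ⟨⟨h1, h2⟩, h3⟩ := hx
            simp only at h3
            subst h3
            rfl
          · intro y hy
            rfl
          · intro x hx
            simp only [Finset.mem_filter, Finset.mem_product] at hx
            obtain ⟨⟨a, b⟩, c, d⟩ := x
            obtain ⟨⟨h1, h2⟩, h3⟩ := hx
            simp only at h3
            subst h3
            rfl
      _ = ∑ y ∈ (J ×ˢ (Finset.univ : Finset (Fin n))).filter (fun y => (y.2, y.1.2) ∈ J),
            η y.1 * Y y.1.1 y.2 * φ (y.2, y.1.2) := by
          apply Finset.sum_subset (Finset.filter_subset _ _)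
          intro y hy hy'
          have : (y.1.1, y.2) ∉ J := by
            intro hc
            exact hy' (Finset.mem_filter.mpr ⟨hy, hc⟩)
          rw [hY _ _ this, mul_zero, zero_mul]
      _ = ∑ p ∈ J, η p * (Y * Xmat J φ) p.1 p.2 := by
          rw [Finset.sum_filter, Finset.sum_product]
          apply Finset.sum_congr rfl
          intro p _
          rw [Matrix.mul_apply, Finset.mul_sum]
          apply Finset.sum_congr rfl
          intro m _
          unfold Xmat
          rw [Matrix.of_apply]
          by_cases h : (m, p.2) ∈ J
          · rw [if_pos h, if_pos h]; ring
          · rw [if_neg h, if_neg h, mul_zero, mul_zero]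

lemma coeff_matrix {J : Finset (Pr n)} (x : {p // p ∈ J} → F) :
    ∃ Y ∈ (nJset J : Set (Matrix (Fin n) (Fin n) F)),
      (fun r : {p // p ∈ J} => Y r.1.1 r.1.2) = x := by
  refine ⟨Matrix.of fun i j => if h : (i, j) ∈ J then x ⟨(i, j), h⟩ else 0, ?_, ?_⟩
  · intro i j hij
    rw [Matrix.of_apply, dif_neg hij]
  · funext r
    rw [Matrix.of_apply]
    have hr : (r.1.1, r.1.2) ∈ J := by
      have : (r.1.1, r.1.2) = r.1 := rfl
      rw [this]; exact r.2
    rw [dif_pos hr]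

lemma right_set_eq {J : Finset (Pr n)} (hJ : Closed J) (η : Pr n → F) :
    {η' : {p // p ∈ J} → F |
        ∃ u : Matrix (Fin n) (Fin n) F, u ∈ UJ J ∧
          ∀ φ : Pr n → F, lamSub J η' (Xmat J φ) = lam J η (Xmat J φ * u⁻¹)}
      = {η' | ∃ x, η' = (fun q => η q.1) + (MetaR J η).mulVec x} := by
  ext η'
  constructor
  · rintro ⟨u, hu, h⟩
    obtain ⟨Y, hY, hinv, -, -⟩ := UJ_inv hJ hu
    refine ⟨fun r => Y r.1.1 r.1.2, ?_⟩
    apply lamSub_funext J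
    intro φ
    rw [h φ, hinv, ← key_right hJ η hY φ]
    rfl
  · rintro ⟨x, hx⟩
    obtain ⟨Y, hY, hYx⟩ := coeff_matrix x
    obtain ⟨Z, hZ, h1, h2⟩ := exists_inv hJ hY
    refine ⟨1 + Z, one_add_mem_UJ hJ hZ, ?_⟩
    intro φ
    rw [Matrix.inv_eq_right_inv h2, hx, ← hYx, ← key_right hJ η hY φ]
    rfl

lemma left_set_eq {J : Finset (Pr n)} (hJ : Closed J) (η : Pr n → F) :
    {η' : {p // p ∈ J} → F |
        ∃ u : Matrix (Fin n) (Fin n) F, u ∈ UJ J ∧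
          ∀ φ : Pr n → F, lamSub J η' (Xmat J φ) = lam J η (u⁻¹ * Xmat J φ)}
      = {η' | ∃ x, η' = (fun q => η q.1) + (MetaL J η).mulVec x} := by
  ext η'
  constructor
  · rintro ⟨u, hu, h⟩
    obtain ⟨Y, hY, hinv, -, -⟩ := UJ_inv hJ hu
    refine ⟨fun r => Y r.1.1 r.1.2, ?_⟩
    apply lamSub_funext J
    intro φ
    rw [h φ, hinv, ← key_left hJ η hY φ]
    rfl
  · rintro ⟨x, hx⟩
    obtain ⟨Y, hY, hYx⟩ := coeff_matrix x
    obtain ⟨Z, hZ, h1, h2⟩ := exists_inv hJ hY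
    refine ⟨1 + Z, one_add_mem_UJ hJ hZ, ?_⟩
    intro φ
    rw [Matrix.inv_eq_right_inv h2, hx, ← hYx, ← key_left hJ η hY φ]
    rfl

lemma MetaR_eq_transpose {J : Finset (Pr n)} (hJ : Closed J) (η : Pr n → F) :
    MetaR J η = (MetaL J η)ᵀ := by
  ext p q
  rw [Matrix.transpose_apply]
  unfold MetaR MetaL
  rw [Matrix.of_apply, Matrix.of_apply]
  have hp : (p.1.1, p.1.2) ∈ J := by
    have : (p.1.1, p.1.2) = p.1 := rfl
    rw [this]; exact p.2
  have hq : (q.1.1, q.1.2) ∈ J := by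
    have : (q.1.1, q.1.2) = q.1 := rfl
    rw [this]; exact q.2
  by_cases h : q.1.1 = p.1.2
  · rw [if_pos ⟨h, hp, h ▸ hq⟩, if_pos ⟨h.symm, h ▸ hp, hq⟩]
  · rw [if_neg (fun hc => h hc.1), if_neg (fun hc => h hc.1.symm)]

lemma card_affine {m : Type*} [Fintype m] [DecidableEq m] (M : Matrix m m F) (c : m → F) :
    Nat.card {w : m → F | ∃ x, w = c + M.mulVec x} = Fintype.card F ^ M.rank := by
  have hset : {w : m → F | ∃ x, w = c + M.mulVec x}
      = (fun v => c + v) '' (LinearMap.range M.mulVecLin : Set (m → F)) := by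
    ext w
    simp only [Set.mem_setOf_eq, Set.mem_image, SetLike.mem_coe, LinearMap.mem_range,
      Matrix.mulVecLin_apply]
    constructor
    · rintro ⟨x, hx⟩; exact ⟨M.mulVec x, ⟨x, rfl⟩, hx.symm⟩
    · rintro ⟨v, ⟨x, hx⟩, hv⟩; exact ⟨x, by rw [← hv, ← hx]⟩
  rw [hset, Nat.card_image_of_injective (add_right_injective c)]
  have h1 : Nat.card ↥(LinearMap.range M.mulVecLin : Set (m → F))
      = Nat.card ↥(LinearMap.range M.mulVecLin) := rfl
  rw [h1]
  letI : Fintype ↥(LinearMap.range M.mulVecLin) := Fintype.ofFinite _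
  rw [Nat.card_eq_fintype_card, Module.card_eq_pow_finrank (K := F)]
  rfl

theorem stmt11 {F : Type*} [Field F] [Fintype F] [DecidableEq F] {n : ℕ}
    (J : Finset (Pr n)) (hJ : Closed J) (η : Pr n → F) :
    Nat.card {η' : {p // p ∈ J} → F |
        ∃ u : Matrix (Fin n) (Fin n) F, u ∈ UJ J ∧
          ∀ φ : Pr n → F, lamSub J η' (Xmat J φ) = lam J η (Xmat J φ * u⁻¹)}
      = Fintype.card F ^ corank J η ∧
    Nat.card {η' : {p // p ∈ J} → F |
        ∃ u : Matrix (Fin n) (Fin n) F, u ∈ UJ J ∧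
          ∀ φ : Pr n → F, lamSub J η' (Xmat J φ) = lam J η (u⁻¹ * Xmat J φ)}
      = Fintype.card F ^ corank J η := by
  constructor
  · rw [right_set_eq hJ η, card_affine, MetaR_eq_transpose hJ η, Matrix.rank_transpose]
    rfl
  · rw [left_set_eq hJ η, card_affine]
    rfl

end SCT
end
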